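/- arXiv:1701.01013 — 4 statements merged into one kernel-verified Lean document; each statement's English description precedes it below -/
import Mathlib

section
/- (Interpolation criterion) Let (E₀, E₁) be an interpolation couple of Banach spaces, F a Banach space, and 0 < θ < 1. A linear map L : E₀ ∩ E₁ → F extends to a bounded operator L : (E₀,E₁)_{θ,1} → F if and only if there exists C > 0 such that ‖Lu‖_F ≤ C ‖u‖_{E₀}^{1-θ} ‖u‖_{E₁}^{θ} for all u ∈ E₀ ∩ E₁. -/
open MeasureTheory Set

set_option maxHeartbeats 2000000 in
/-- interpolation criterion, Tartar Lemma 25.3: for an interpolation couple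
`(E₀, E₁)` (two normed subspaces of an ambient vector space `X`, with norms `n₀, n₁`),
a Banach space `F` and `0 < θ < 1`, a linear map `L : E₀ ∩ E₁ → F` extends to a bounded
operator on the real interpolation space `(E₀,E₁)_{θ,1}` (equivalently, is bounded on
`E₀ ∩ E₁` for the `(θ,1)`-norm `u ↦ ∫_0^∞ t^{-θ} K(t,u) dt/t`, `E₀ ∩ E₁` being dense there)
iff `‖Lu‖ ≤ C n₀(u)^{1-θ} n₁(u)^θ` on `E₀ ∩ E₁`. -/
theorem stmt_7 {X : Type*} [AddCommGroup X] [Module ℝ X]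
    {F : Type*} [NormedAddCommGroup F] [NormedSpace ℝ F] [CompleteSpace F]
    (E₀ E₁ : Submodule ℝ X) (n₀ n₁ : X → ℝ)
    (h₀nonneg : ∀ u, 0 ≤ n₀ u) (h₁nonneg : ∀ u, 0 ≤ n₁ u)
    (h₀zero : n₀ 0 = 0) (h₁zero : n₁ 0 = 0)
    (h₀add : ∀ u v, u ∈ E₀ → v ∈ E₀ → n₀ (u + v) ≤ n₀ u + n₀ v)
    (h₁add : ∀ u v, u ∈ E₁ → v ∈ E₁ → n₁ (u + v) ≤ n₁ u + n₁ v)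
    (h₀smul : ∀ (c : ℝ) u, u ∈ E₀ → n₀ (c • u) = |c| * n₀ u)
    (h₁smul : ∀ (c : ℝ) u, u ∈ E₁ → n₁ (c • u) = |c| * n₁ u)
    (θ : ℝ) (hθ0 : 0 < θ) (hθ1 : θ < 1)
    (K : ℝ → X → ℝ)
    (hK : ∀ t u, K t u =
      sInf {r : ℝ | ∃ u₀ ∈ E₀, ∃ u₁ ∈ E₁, u = u₀ + u₁ ∧ r = n₀ u₀ + t * n₁ u₁})
    (L : X →ₗ[ℝ] F) :
    (∃ C' : ℝ, 0 < C' ∧ ∀ u ∈ E₀ ⊓ E₁,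
        ‖L u‖ ≤ C' * ∫ t in Set.Ioi (0:ℝ), t ^ (-θ) * K t u / t) ↔
    (∃ C : ℝ, 0 < C ∧ ∀ u ∈ E₀ ⊓ E₁,
        ‖L u‖ ≤ C * n₀ u ^ (1 - θ) * n₁ u ^ θ) := by
  have hθ1' : (0:ℝ) < 1 - θ := by linarith
  -- basic facts about K
  have hbdd : ∀ (t : ℝ) (u : X), 0 ≤ t →
      BddBelow {r : ℝ | ∃ u₀ ∈ E₀, ∃ u₁ ∈ E₁, u = u₀ + u₁ ∧ r = n₀ u₀ + t * n₁ u₁} := by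
    intro t u ht
    refine ⟨0, ?_⟩
    rintro r ⟨x, hx, y, hy, -, rfl⟩
    exact add_nonneg (h₀nonneg x) (mul_nonneg ht (h₁nonneg y))
  have hKle : ∀ (t : ℝ) (u a b : X), 0 ≤ t → a ∈ E₀ → b ∈ E₁ → u = a + b →
      K t u ≤ n₀ a + t * n₁ b := by
    intro t u a b ht ha hb hab
    rw [hK]
    exact csInf_le (hbdd t u ht) ⟨a, ha, b, hb, hab, rfl⟩
  have hKle₀ : ∀ (t : ℝ) u, 0 ≤ t → u ∈ E₀ → K t u ≤ n₀ u := by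
    intro t u ht hu
    have := hKle t u u 0 ht hu E₁.zero_mem (by simp)
    simpa [h₁zero] using this
  have hKle₁ : ∀ (t : ℝ) u, 0 ≤ t → u ∈ E₁ → K t u ≤ t * n₁ u := by
    intro t u ht hu
    have := hKle t u 0 u ht E₀.zero_mem hu (zero_add u).symm
    simpa [h₀zero] using this
  have hK0 : ∀ (t : ℝ) u, 0 ≤ t → u ∈ E₀ → 0 ≤ K t u := by
    intro t u ht hu
    rw [hK]
    refine le_csInf ⟨n₀ u, u, hu, 0, E₁.zero_mem, by simp, by simp [h₁zero]⟩ ?_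
    rintro r ⟨x, hx, y, hy, -, rfl⟩
    exact add_nonneg (h₀nonneg x) (mul_nonneg ht (h₁nonneg y))
  have hKmono : ∀ (s t : ℝ) u, 0 ≤ s → s ≤ t → u ∈ E₀ → K s u ≤ K t u := by
    intro s t u hs hst hu
    rw [hK t u]
    refine le_csInf ⟨n₀ u, u, hu, 0, E₁.zero_mem, by simp, by simp [h₁zero]⟩ ?_
    rintro r ⟨x, hx, y, hy, hxy, rfl⟩
    refine (hKle s u x y hs hx hy hxy).trans ?_
    have := h₁nonneg y
    nlinarith
  have hKex : ∀ (t : ℝ) u, u ∈ E₀ → ∀ δ : ℝ, 0 < δ →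
      ∃ a b, a ∈ E₀ ∧ b ∈ E₁ ∧ u = a + b ∧ n₀ a + t * n₁ b ≤ K t u + δ := by
    intro t u hu δ hδ
    have hne : {r : ℝ | ∃ u₀ ∈ E₀, ∃ u₁ ∈ E₁, u = u₀ + u₁ ∧ r = n₀ u₀ + t * n₁ u₁}.Nonempty :=
      ⟨n₀ u + t * n₁ 0, u, hu, 0, E₁.zero_mem, by simp, rfl⟩
    have h1 : K t u < K t u + δ := lt_add_of_pos_right _ hδ
    rw [hK t u] at h1
    obtain ⟨r, hrS, hrlt⟩ := exists_lt_of_csInf_lt hne h1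
    rw [← hK t u] at hrlt
    obtain ⟨a, ha, b, hb, hab, rfl⟩ := hrS
    exact ⟨a, b, ha, hb, hab, hrlt.le⟩
  -- subadditivity for differences
  have hsub₀ : ∀ x y, x ∈ E₀ → y ∈ E₀ → n₀ (x - y) ≤ n₀ x + n₀ y := by
    intro x y hx hy
    have h1 : x - y = x + (-1 : ℝ) • y := by
      simp [sub_eq_add_neg]
    rw [h1]
    refine (h₀add _ _ hx (E₀.smul_mem _ hy)).trans ?_
    rw [h₀smul _ _ hy]
    simp
  have hsub₁ : ∀ x y, x ∈ E₁ → y ∈ E₁ → n₁ (x - y) ≤ n₁ x + n₁ y := by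
    intro x y hx hy
    have h1 : x - y = x + (-1 : ℝ) • y := by
      simp [sub_eq_add_neg]
    rw [h1]
    refine (h₁add _ _ hx (E₁.smul_mem _ hy)).trans ?_
    rw [h₁smul _ _ hy]
    simp
  -- measurability
  have hmeas : ∀ u, u ∈ E₀ → ∀ s : Set ℝ, MeasurableSet s → s ⊆ Ioi 0 →
      AEStronglyMeasurable (fun t => t ^ (-θ) * K t u / t) (volume.restrict s) := by
    intro u hu s hs hsub
    have hmono : MonotoneOn (fun t => K t u) s := by
      intro x hx y hy hxy
      exact hKmono x y u (le_of_lt (hsub hx)) hxy hu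
    have h1 : AEMeasurable (fun t => K t u) (volume.restrict s) :=
      aemeasurable_restrict_of_monotoneOn hs hmono
    have h2 : Measurable (fun t : ℝ => t ^ (-θ)) := by measurability
    exact ((h2.aemeasurable.mul h1).div measurable_id.aemeasurable).aestronglyMeasurable
  -- integrability
  have hint : ∀ u, u ∈ E₀ → u ∈ E₁ →
      IntegrableOn (fun t => t ^ (-θ) * K t u / t) (Ioi (0:ℝ)) := by
    intro u hu₀ hu₁
    have hIoc : IntegrableOn (fun t => t ^ (-θ) * K t u / t) (Ioc (0:ℝ) 1) := by
      refine Integrable.mono'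
        (((intervalIntegral.intervalIntegrable_rpow' (by linarith : (-1:ℝ) < -θ)).1).const_mul
          (n₁ u))
        (hmeas u hu₀ _ measurableSet_Ioc Ioc_subset_Ioi_self) ?_
      refine (ae_restrict_iff' measurableSet_Ioc).2 (ae_of_all _ ?_)
      rintro x ⟨hx0, hx1⟩
      have hKt := hK0 x u hx0.le hu₀
      have hrp : (0:ℝ) ≤ x ^ (-θ) := Real.rpow_nonneg hx0.le _
      have hxne : x ≠ 0 := ne_of_gt hx0
      rw [Real.norm_of_nonneg (div_nonneg (mul_nonneg hrp hKt) hx0.le)]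
      have h1 : K x u ≤ x * n₁ u := hKle₁ x u hx0.le hu₁
      calc x ^ (-θ) * K x u / x ≤ x ^ (-θ) * (x * n₁ u) / x := by gcongr
        _ = n₁ u * x ^ (-θ) := by field_simp
    have hIoi : IntegrableOn (fun t => t ^ (-θ) * K t u / t) (Ioi (1:ℝ)) := by
      refine Integrable.mono'
        ((integrableOn_Ioi_rpow_of_lt (by linarith : -θ-1 < -1) one_pos).const_mul (n₀ u))
        (hmeas u hu₀ _ measurableSet_Ioi (fun x hx => mem_Ioi.2 (lt_trans one_pos (mem_Ioi.1 hx)))) ?_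
      refine (ae_restrict_iff' measurableSet_Ioi).2 (ae_of_all _ ?_)
      intro x hx
      have hx0 : (0:ℝ) < x := lt_trans one_pos hx
      have hKt := hK0 x u hx0.le hu₀
      have hrp : (0:ℝ) ≤ x ^ (-θ) := Real.rpow_nonneg hx0.le _
      rw [Real.norm_of_nonneg (div_nonneg (mul_nonneg hrp hKt) hx0.le)]
      have h1 : K x u ≤ n₀ u := hKle₀ x u hx0.le hu₀
      calc x ^ (-θ) * K x u / x ≤ x ^ (-θ) * n₀ u / x := by gcongr
        _ = n₀ u * x ^ (-θ-1) := by
            rw [Real.rpow_sub hx0, Real.rpow_one]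
            ring
    have h2 := hIoc.union hIoi
    rwa [Ioc_union_Ioi_eq_Ioi zero_le_one] at h2
  -- nonnegativity of the integrand / integral
  have hfnn : ∀ u, u ∈ E₀ → ∀ x ∈ Ioi (0:ℝ), 0 ≤ x ^ (-θ) * K x u / x := by
    intro u hu x hx
    exact div_nonneg (mul_nonneg (Real.rpow_nonneg (le_of_lt hx) _) (hK0 x u (le_of_lt hx) hu))
      (le_of_lt hx)
  have hInn : ∀ u, u ∈ E₀ → 0 ≤ ∫ x in Ioi (0:ℝ), x ^ (-θ) * K x u / x :=
    fun u hu => setIntegral_nonneg measurableSet_Ioi (hfnn u hu)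
  -- vanishing cases
  have hIzero : ∀ u, (∀ x : ℝ, 0 < x → K x u = 0) →
      (∫ x in Ioi (0:ℝ), x ^ (-θ) * K x u / x) = 0 := by
    intro u hz
    have he : EqOn (fun x => x ^ (-θ) * K x u / x) (fun _ => (0:ℝ)) (Ioi 0) := by
      intro x hx
      simp [hz x hx]
    rw [setIntegral_congr_fun measurableSet_Ioi he, integral_zero]
  have hKz₀ : ∀ u, u ∈ E₀ → n₀ u = 0 → ∀ x : ℝ, 0 < x → K x u = 0 := by
    intro u hu hn x hx
    refine le_antisymm ?_ (hK0 x u hx.le hu)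
    have := hKle₀ x u hx.le hu
    linarith
  have hKz₁ : ∀ u, u ∈ E₀ → u ∈ E₁ → n₁ u = 0 → ∀ x : ℝ, 0 < x → K x u = 0 := by
    intro u hu0 hu1 hn x hx
    refine le_antisymm ?_ (hK0 x u hx.le hu0)
    have := hKle₁ x u hx.le hu1
    nlinarith
  -- the forward integral bound
  have hIbound : ∀ u, u ∈ E₀ → u ∈ E₁ → 0 < n₀ u → 0 < n₁ u →
      (∫ x in Ioi (0:ℝ), x ^ (-θ) * K x u / x)
        ≤ ((1-θ)⁻¹ + θ⁻¹) * (n₀ u ^ (1-θ) * n₁ u ^ θ) := by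
    intro u hu₀ hu₁ hp₀ hp₁
    set T := n₀ u / n₁ u with hT
    have hTpos : 0 < T := div_pos hp₀ hp₁
    have hsplit : Ioc (0:ℝ) T ∪ Ioi T = Ioi 0 := Ioc_union_Ioi_eq_Ioi hTpos.le
    have hint1 : IntegrableOn (fun x => x ^ (-θ) * K x u / x) (Ioc (0:ℝ) T) :=
      (hint u hu₀ hu₁).mono_set (by rw [← hsplit]; exact subset_union_left)
    have hint2 : IntegrableOn (fun x => x ^ (-θ) * K x u / x) (Ioi T) :=
      (hint u hu₀ hu₁).mono_set (by rw [← hsplit]; exact subset_union_right)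
    have heq : (∫ x in Ioi (0:ℝ), x ^ (-θ) * K x u / x)
        = (∫ x in Ioc (0:ℝ) T, x ^ (-θ) * K x u / x)
          + ∫ x in Ioi T, x ^ (-θ) * K x u / x := by
      rw [← setIntegral_union (Ioc_disjoint_Ioi le_rfl) measurableSet_Ioi hint1 hint2, hsplit]
    have hb1 : (∫ x in Ioc (0:ℝ) T, x ^ (-θ) * K x u / x)
        ≤ ∫ x in Ioc (0:ℝ) T, n₁ u * x ^ (-θ) := by
      refine setIntegral_mono_on hint1
        ((intervalIntegral.intervalIntegrable_rpow' (by linarith : (-1:ℝ) < -θ)).1.const_mul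
          (n₁ u)) measurableSet_Ioc ?_
      rintro x ⟨hx0, hx1⟩
      have hxne : x ≠ 0 := ne_of_gt hx0
      have h1 : K x u ≤ x * n₁ u := hKle₁ x u hx0.le hu₁
      have hrp : (0:ℝ) ≤ x ^ (-θ) := Real.rpow_nonneg hx0.le _
      calc x ^ (-θ) * K x u / x ≤ x ^ (-θ) * (x * n₁ u) / x := by gcongr
        _ = n₁ u * x ^ (-θ) := by field_simp
    have hb2 : (∫ x in Ioi T, x ^ (-θ) * K x u / x)
        ≤ ∫ x in Ioi T, n₀ u * x ^ (-θ-1) := by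
      refine setIntegral_mono_on hint2
        ((integrableOn_Ioi_rpow_of_lt (by linarith : -θ-1 < -1) hTpos).const_mul (n₀ u))
        measurableSet_Ioi ?_
      intro x hx
      have hx0 : (0:ℝ) < x := lt_trans hTpos hx
      have h1 : K x u ≤ n₀ u := hKle₀ x u hx0.le hu₀
      have hrp : (0:ℝ) ≤ x ^ (-θ) := Real.rpow_nonneg hx0.le _
      calc x ^ (-θ) * K x u / x ≤ x ^ (-θ) * n₀ u / x := by gcongr
        _ = n₀ u * x ^ (-θ-1) := by
            rw [Real.rpow_sub hx0, Real.rpow_one]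
            ring
    have hv1 : (∫ x in Ioc (0:ℝ) T, n₁ u * x ^ (-θ)) = n₁ u * (T ^ (1-θ) / (1-θ)) := by
      rw [integral_const_mul]
      congr 1
      rw [← intervalIntegral.integral_of_le hTpos.le,
        integral_rpow (Or.inl (by linarith : (-1:ℝ) < -θ)),
        Real.zero_rpow (by linarith : -θ + 1 ≠ 0)]
      rw [show -θ + 1 = 1 - θ by ring]
      ring
    have hv2 : (∫ x in Ioi T, n₀ u * x ^ (-θ-1)) = n₀ u * (T ^ (-θ) / θ) := by
      rw [integral_const_mul]
      congr 1
      rw [integral_Ioi_rpow_of_lt (by linarith : -θ-1 < -1) hTpos]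
      rw [show -θ-1+1 = -θ by ring]
      field_simp
    have hTr : ∀ c : ℝ, T ^ c = n₀ u ^ c * n₁ u ^ (-c) := by
      intro c
      rw [hT, Real.div_rpow hp₀.le hp₁.le, Real.rpow_neg hp₁.le, div_eq_mul_inv]
    have key1 : n₁ u * T ^ (1 - θ) = n₀ u ^ (1-θ) * n₁ u ^ θ := by
      rw [hTr (1 - θ),
        show n₁ u * (n₀ u ^ (1-θ) * n₁ u ^ (-(1-θ)))
          = n₀ u ^ (1-θ) * (n₁ u ^ (1:ℝ) * n₁ u ^ (-(1-θ))) by rw [Real.rpow_one]; ring,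
        ← Real.rpow_add hp₁]
      rw [show (1:ℝ) + -(1-θ) = θ by ring]
    have key2 : n₀ u * T ^ (-θ) = n₀ u ^ (1-θ) * n₁ u ^ θ := by
      rw [hTr (-θ), neg_neg,
        show n₀ u * (n₀ u ^ (-θ) * n₁ u ^ θ)
          = (n₀ u ^ (1:ℝ) * n₀ u ^ (-θ)) * n₁ u ^ θ by rw [Real.rpow_one]; ring,
        ← Real.rpow_add hp₀]
      rw [show (1:ℝ) + -θ = 1 - θ by ring]
    calc (∫ x in Ioi (0:ℝ), x ^ (-θ) * K x u / x)
        ≤ n₁ u * (T ^ (1-θ) / (1-θ)) + n₀ u * (T ^ (-θ) / θ) := by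
          rw [heq]
          exact add_le_add (hb1.trans_eq hv1) (hb2.trans_eq hv2)
      _ = (1-θ)⁻¹ * (n₁ u * T ^ (1-θ)) + θ⁻¹ * (n₀ u * T ^ (-θ)) := by ring
      _ = ((1-θ)⁻¹ + θ⁻¹) * (n₀ u ^ (1-θ) * n₁ u ^ θ) := by rw [key1, key2]; ring
  constructor
  · -- forward direction
    rintro ⟨C', hC', h⟩
    refine ⟨C' * ((1-θ)⁻¹ + θ⁻¹), mul_pos hC' (by positivity), ?_⟩
    intro u hu
    obtain ⟨hu₀, hu₁⟩ := Submodule.mem_inf.1 hu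
    rcases eq_or_lt_of_le (h₀nonneg u) with h0 | h0
    · have hz := hIzero u (hKz₀ u hu₀ h0.symm)
      have hLu : ‖L u‖ ≤ 0 := by
        have h2 := h u hu
        rwa [hz, mul_zero] at h2
      rw [← h0, Real.zero_rpow (by linarith : (1:ℝ) - θ ≠ 0), mul_zero, zero_mul]
      exact hLu
    rcases eq_or_lt_of_le (h₁nonneg u) with h1 | h1
    · have hz := hIzero u (hKz₁ u hu₀ hu₁ h1.symm)
      have hLu : ‖L u‖ ≤ 0 := by
        have h2 := h u hu
        rwa [hz, mul_zero] at h2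
      rw [← h1, Real.zero_rpow (ne_of_gt hθ0), mul_zero]
      exact hLu
    · calc ‖L u‖ ≤ C' * ∫ x in Ioi (0:ℝ), x ^ (-θ) * K x u / x := h u hu
        _ ≤ C' * (((1-θ)⁻¹ + θ⁻¹) * (n₀ u ^ (1-θ) * n₁ u ^ θ)) :=
            mul_le_mul_of_nonneg_left (hIbound u hu₀ hu₁ h0 h1) hC'.le
        _ = C' * ((1-θ)⁻¹ + θ⁻¹) * n₀ u ^ (1-θ) * n₁ u ^ θ := by ring
  · -- reverse direction
    rintro ⟨C, hC, h⟩
    refine ⟨16 * C, by positivity, ?_⟩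
    intro u hu
    obtain ⟨hu₀, hu₁⟩ := Submodule.mem_inf.1 hu
    have hInn' := hInn u hu₀
    rcases eq_or_lt_of_le (h₀nonneg u) with h0 | h0
    · have hLu : ‖L u‖ ≤ 0 := by
        have h2 := h u hu
        rwa [← h0, Real.zero_rpow (by linarith : (1:ℝ) - θ ≠ 0), mul_zero, zero_mul] at h2
      exact hLu.trans (by positivity)
    rcases eq_or_lt_of_le (h₁nonneg u) with h1 | h1
    · have hLu : ‖L u‖ ≤ 0 := by
        have h2 := h u hu
        rwa [← h1, Real.zero_rpow (ne_of_gt hθ0), mul_zero] at h2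
      exact hLu.trans (by positivity)
    refine le_of_forall_pos_le_add ?_
    intro η hη
    -- choice of the cutoff M
    set c := min θ (1-θ) with hc
    have hcpos : 0 < c := lt_min hθ0 hθ1'
    have hrlt : (2:ℝ) ^ (-c) < 1 :=
      Real.rpow_lt_one_of_one_lt_of_neg one_lt_two (neg_lt_zero.2 hcpos)
    set A := 6 * C * (n₀ u + n₁ u) with hA
    have hApos : 0 < A := by positivity
    obtain ⟨M, hM⟩ := exists_pow_lt_of_lt_one (show (0:ℝ) < η / 4 / A by positivity) hrlt
    have hMx : (2:ℝ) ^ (-c * (M:ℝ)) < η / 4 / A := by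
      rw [Real.rpow_mul two_pos.le, Real.rpow_natCast]
      exact hM
    have hMnn : (0:ℝ) ≤ (M:ℝ) := Nat.cast_nonneg M
    have hedge₀ : 6 * C * n₁ u * (2:ℝ) ^ (-(M:ℝ) * (1-θ)) ≤ η / 4 := by
      have h2 : (2:ℝ) ^ (-(M:ℝ) * (1-θ)) ≤ (2:ℝ) ^ (-c * (M:ℝ)) := by
        apply Real.rpow_le_rpow_of_exponent_le one_le_two
        have hcle : c ≤ 1 - θ := min_le_right _ _
        nlinarith
      have h3 : 6 * C * n₁ u ≤ A := by
        rw [hA]; nlinarith [h₀nonneg u]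
      calc 6 * C * n₁ u * (2:ℝ) ^ (-(M:ℝ) * (1-θ))
          ≤ A * ((2:ℝ) ^ (-c * (M:ℝ))) := by
            have := Real.rpow_nonneg (le_of_lt two_pos) (-(M:ℝ) * (1-θ))
            have := Real.rpow_nonneg (le_of_lt two_pos) (-c * (M:ℝ))
            nlinarith
        _ ≤ A * (η / 4 / A) := mul_le_mul_of_nonneg_left hMx.le hApos.le
        _ = η / 4 := by field_simp
    have hedge₁ : 6 * C * n₀ u * (2:ℝ) ^ (-(M:ℝ) * θ) ≤ η / 4 := by
      have h2 : (2:ℝ) ^ (-(M:ℝ) * θ) ≤ (2:ℝ) ^ (-c * (M:ℝ)) := by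
        apply Real.rpow_le_rpow_of_exponent_le one_le_two
        have hcle : c ≤ θ := min_le_left _ _
        nlinarith
      have h3 : 6 * C * n₀ u ≤ A := by
        rw [hA]; nlinarith [h₁nonneg u]
      calc 6 * C * n₀ u * (2:ℝ) ^ (-(M:ℝ) * θ)
          ≤ A * ((2:ℝ) ^ (-c * (M:ℝ))) := by
            have := Real.rpow_nonneg (le_of_lt two_pos) (-(M:ℝ) * θ)
            have := Real.rpow_nonneg (le_of_lt two_pos) (-c * (M:ℝ))
            nlinarith
        _ ≤ A * (η / 4 / A) := mul_le_mul_of_nonneg_left hMx.le hApos.le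
        _ = η / 4 := by field_simp
    -- the grid
    set tM : ℝ := (2:ℝ) ^ (-(M:ℝ)) with htM
    have htMpos : 0 < tM := Real.rpow_pos_of_pos two_pos _
    have htM1 : tM ≤ 1 :=
      Real.rpow_le_one_of_one_le_of_nonpos one_le_two (neg_nonpos.2 hMnn)
    set D : ℝ := 4 * C * (M:ℝ) * (2:ℝ) ^ ((M:ℝ) * θ) + 1 with hD
    have hDpos : 0 < D := by positivity
    set ε : ℝ := min (tM * n₀ u) (min (tM * n₁ u) (η / 4 / D)) with hεdef
    have hεpos : 0 < ε := lt_min (by positivity) (lt_min (by positivity) (by positivity))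
    have hε₀ : ε ≤ tM * n₀ u := min_le_left _ _
    have hε₁ : ε ≤ tM * n₁ u := (min_le_right _ _).trans (min_le_left _ _)
    have hεD : ε ≤ η / 4 / D := (min_le_right _ _).trans (min_le_right _ _)
    set N := 2 * M with hN
    set t : ℕ → ℝ := fun i => (2:ℝ) ^ ((i:ℝ) - M) with htdef
    have htpos : ∀ i, 0 < t i := fun i => Real.rpow_pos_of_pos two_pos _
    have htmono : ∀ i j : ℕ, i ≤ j → t i ≤ t j := by
      intro i j hij
      exact Real.rpow_le_rpow_of_exponent_le one_le_two
        (sub_le_sub_right (Nat.cast_le.2 hij) _)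
    have htdouble : ∀ i : ℕ, t (i+1) = 2 * t i := by
      intro i
      show (2:ℝ) ^ (((i+1:ℕ):ℝ) - M) = 2 * (2:ℝ) ^ ((i:ℝ) - M)
      rw [show ((i+1:ℕ):ℝ) - M = 1 + ((i:ℝ) - M) by push_cast; ring,
        Real.rpow_add two_pos, Real.rpow_one]
    -- near-optimal decompositions
    choose a b ha hb hab hcost using fun i : ℕ => hKex (t i) u hu₀ ε hεpos
    have haE₁ : ∀ i, a i ∈ E₁ := by
      intro i
      have h2 : a i = u - b i := by rw [hab i]; abel
      rw [h2]; exact Submodule.sub_mem _ hu₁ (hb i)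
    have hbE₀ : ∀ i, b i ∈ E₀ := by
      intro i
      have h2 : b i = u - a i := by rw [hab i]; abel
      rw [h2]; exact Submodule.sub_mem _ hu₀ (ha i)
    have hKnn : ∀ i, 0 ≤ K (t i) u := fun i => hK0 _ u (htpos i).le hu₀
    have hn₀a : ∀ i, n₀ (a i) ≤ K (t i) u + ε := by
      intro i
      have h2 := mul_nonneg (htpos i).le (h₁nonneg (b i))
      linarith [hcost i]
    have hn₁b : ∀ i, n₁ (b i) ≤ (K (t i) u + ε) / t i := by
      intro i
      rw [le_div_iff₀ (htpos i), mul_comm]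
      linarith [hcost i, h₀nonneg (a i)]
    -- telescoping decomposition
    have hdecomp : u = a 0 + b N + ∑ i ∈ Finset.range N, (a (i+1) - a i) := by
      rw [Finset.sum_range_sub a, hab N]
      abel
    have hLdecomp : ‖L u‖ ≤ ‖L (a 0)‖ + ‖L (b N)‖
        + ∑ i ∈ Finset.range N, ‖L (a (i+1) - a i)‖ := by
      have h2 : L u = L (a 0) + L (b N) + ∑ i ∈ Finset.range N, L (a (i+1) - a i) := by
        rw [← map_sum, ← map_add, ← map_add]
        exact congrArg L hdecomp
      calc ‖L u‖ = ‖L (a 0) + L (b N) + ∑ i ∈ Finset.range N, L (a (i+1) - a i)‖ := by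
            rw [h2]
        _ ≤ ‖L (a 0)‖ + ‖L (b N)‖ + ‖∑ i ∈ Finset.range N, L (a (i+1) - a i)‖ :=
            norm_add₃_le
        _ ≤ _ := by
            gcongr
            exact norm_sum_le _ _
    -- edge terms
    have ht0 : t 0 = tM := by
      show (2:ℝ) ^ (((0:ℕ):ℝ) - M) = (2:ℝ) ^ (-(M:ℝ))
      norm_num
    have htNM : t N = (2:ℝ) ^ ((M:ℝ)) := by
      show (2:ℝ) ^ (((N:ℕ):ℝ) - M) = (2:ℝ) ^ ((M:ℝ))
      rw [hN]; push_cast; ring_nf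
    have hrpow_one_split : ∀ x : ℝ, (2:ℝ) ^ ((1:ℝ) + x) = 2 * (2:ℝ) ^ x := by
      intro x
      rw [Real.rpow_add two_pos, Real.rpow_one]
    have hedgeA : ‖L (a 0)‖ ≤ 6 * C * n₁ u * (2:ℝ) ^ (-(M:ℝ) * (1-θ)) := by
      have hK0le : K (t 0) u ≤ tM * n₁ u :=
        (hKle₁ (t 0) u (htpos 0).le hu₁).trans (le_of_eq (by rw [ht0]))
      have h₁a : n₀ (a 0) ≤ 2 * tM * n₁ u := by
        linarith [hn₀a 0, hε₁, hK0le]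
      have h₂a : n₁ (a 0) ≤ 3 * n₁ u := by
        have ha0 : a 0 = u - b 0 := by rw [hab 0]; abel
        have h3 : n₁ (a 0) ≤ n₁ u + n₁ (b 0) := by
          rw [ha0]; exact hsub₁ u (b 0) hu₁ (hb 0)
        have h4 := hn₁b 0
        have h5 : (K (t 0) u + ε) / t 0 ≤ 2 * n₁ u := by
          rw [div_le_iff₀ (htpos 0)]
          have e : t 0 * n₁ u = tM * n₁ u := by rw [ht0]
          nlinarith [hK0le, hε₁, e]
        linarith
      have hLa : ‖L (a 0)‖ ≤ C * n₀ (a 0) ^ (1-θ) * n₁ (a 0) ^ θ :=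
        h (a 0) (Submodule.mem_inf.2 ⟨ha 0, haE₁ 0⟩)
      have e1 : (2 * tM * n₁ u) ^ (1-θ) * (3 * n₁ u) ^ θ
          = ((2 * tM) ^ (1-θ) * 3 ^ θ) * n₁ u := by
        rw [show 2 * tM * n₁ u = (2 * tM) * n₁ u by ring,
          Real.mul_rpow (by positivity) (h₁nonneg u),
          Real.mul_rpow (by norm_num) (h₁nonneg u),
          show (2 * tM) ^ (1-θ) * n₁ u ^ (1-θ) * ((3:ℝ) ^ θ * n₁ u ^ θ)
            = (2 * tM) ^ (1-θ) * 3 ^ θ * (n₁ u ^ (1-θ) * n₁ u ^ θ) by ring,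
          ← Real.rpow_add h1, show (1:ℝ) - θ + θ = 1 by ring, Real.rpow_one]
      have e2 : (2 * tM) ^ (1-θ) ≤ 2 * (2:ℝ) ^ (-(M:ℝ) * (1-θ)) := by
        have h6 : 2 * tM = (2:ℝ) ^ ((1:ℝ) + -(M:ℝ)) := by
          rw [hrpow_one_split, htM]
        rw [h6, ← Real.rpow_mul two_pos.le, ← hrpow_one_split]
        apply Real.rpow_le_rpow_of_exponent_le one_le_two
        nlinarith
      have e3 : (3:ℝ) ^ θ ≤ 3 := by
        calc (3:ℝ) ^ θ ≤ (3:ℝ) ^ (1:ℝ) :=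
              Real.rpow_le_rpow_of_exponent_le (by norm_num) hθ1.le
          _ = 3 := Real.rpow_one 3
      calc ‖L (a 0)‖ ≤ C * (2 * tM * n₁ u) ^ (1-θ) * (3 * n₁ u) ^ θ := by
            refine hLa.trans ?_
            gcongr <;> first | exact h₀nonneg _ | exact h₁nonneg _ | exact h₁a | exact h₂a | exact Real.rpow_nonneg (h₁nonneg _) _
        _ = C * (((2 * tM) ^ (1-θ) * 3 ^ θ) * n₁ u) := by rw [mul_assoc, e1]
        _ ≤ C * ((2 * (2:ℝ) ^ (-(M:ℝ) * (1-θ)) * 3) * n₁ u) := by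
            have h7 := Real.rpow_nonneg (show (0:ℝ) ≤ 3 by norm_num) θ
            have h10 := h₁nonneg u
            exact mul_le_mul_of_nonneg_left
              (mul_le_mul_of_nonneg_right (mul_le_mul e2 e3 h7 (by positivity)) h10) hC.le
        _ = 6 * C * n₁ u * (2:ℝ) ^ (-(M:ℝ) * (1-θ)) := by ring
    have eTN : tM * t N = 1 := by
      show (2:ℝ) ^ (-(M:ℝ)) * (2:ℝ) ^ ((N:ℝ) - M) = 1
      rw [← Real.rpow_add two_pos,
        show -(M:ℝ) + ((N:ℝ) - M) = 0 by rw [hN]; push_cast; ring]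
      exact Real.rpow_zero 2
    have hedgeB : ‖L (b N)‖ ≤ 6 * C * n₀ u * (2:ℝ) ^ (-(M:ℝ) * θ) := by
      have hKNle : K (t N) u ≤ n₀ u := hKle₀ (t N) u (htpos N).le hu₀
      have hεu : ε ≤ n₀ u := hε₀.trans (by nlinarith [h₀nonneg u])
      have h₁bN : n₁ (b N) ≤ 2 * tM * n₀ u := by
        have h4 := hn₁b N
        have h5 : (K (t N) u + ε) / t N ≤ 2 * tM * n₀ u := by
          rw [div_le_iff₀ (htpos N)]
          have e : 2 * tM * n₀ u * t N = 2 * n₀ u := by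
            rw [show 2 * tM * n₀ u * t N = 2 * n₀ u * (tM * t N) by ring, eTN, mul_one]
          rw [e]
          linarith [hKNle, hεu]
        linarith
      have h₀bN : n₀ (b N) ≤ 3 * n₀ u := by
        have hb0 : b N = u - a N := by rw [hab N]; abel
        have h3 : n₀ (b N) ≤ n₀ u + n₀ (a N) := by
          rw [hb0]; exact hsub₀ u (a N) hu₀ (ha N)
        have h4 := hn₀a N
        linarith [hKNle, hεu]
      have hLb : ‖L (b N)‖ ≤ C * n₀ (b N) ^ (1-θ) * n₁ (b N) ^ θ :=
        h (b N) (Submodule.mem_inf.2 ⟨hbE₀ N, hb N⟩)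
      have e1 : (3 * n₀ u) ^ (1-θ) * (2 * tM * n₀ u) ^ θ
          = (3 ^ (1-θ) * (2 * tM) ^ θ) * n₀ u := by
        rw [show 2 * tM * n₀ u = (2 * tM) * n₀ u by ring,
          Real.mul_rpow (by norm_num) (h₀nonneg u),
          Real.mul_rpow (by positivity) (h₀nonneg u),
          show (3:ℝ) ^ (1-θ) * n₀ u ^ (1-θ) * ((2 * tM) ^ θ * n₀ u ^ θ)
            = (3:ℝ) ^ (1-θ) * (2 * tM) ^ θ * (n₀ u ^ (1-θ) * n₀ u ^ θ) by ring,
          ← Real.rpow_add h0, show (1:ℝ) - θ + θ = 1 by ring, Real.rpow_one]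
      have e2 : (2 * tM) ^ θ ≤ 2 * (2:ℝ) ^ (-(M:ℝ) * θ) := by
        have h6 : 2 * tM = (2:ℝ) ^ ((1:ℝ) + -(M:ℝ)) := by
          rw [hrpow_one_split, htM]
        rw [h6, ← Real.rpow_mul two_pos.le, ← hrpow_one_split]
        apply Real.rpow_le_rpow_of_exponent_le one_le_two
        nlinarith
      have e3 : (3:ℝ) ^ (1-θ) ≤ 3 := by
        calc (3:ℝ) ^ (1-θ) ≤ (3:ℝ) ^ (1:ℝ) :=
              Real.rpow_le_rpow_of_exponent_le (by norm_num) (by linarith)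
          _ = 3 := Real.rpow_one 3
      calc ‖L (b N)‖ ≤ C * (3 * n₀ u) ^ (1-θ) * (2 * tM * n₀ u) ^ θ := by
            refine hLb.trans ?_
            gcongr <;> first | exact h₀nonneg _ | exact h₁nonneg _ | exact h₀bN | exact h₁bN | exact Real.rpow_nonneg (h₁nonneg _) _
        _ = C * ((3 ^ (1-θ) * (2 * tM) ^ θ) * n₀ u) := by rw [mul_assoc, e1]
        _ ≤ C * ((3 * (2 * (2:ℝ) ^ (-(M:ℝ) * θ))) * n₀ u) := by
            have h8 := Real.rpow_nonneg (show (0:ℝ) ≤ 2 * tM by positivity) θ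
            have h10 := h₀nonneg u
            exact mul_le_mul_of_nonneg_left
              (mul_le_mul_of_nonneg_right (mul_le_mul e3 e2 h8 (by norm_num)) h10) hC.le
        _ = 6 * C * n₀ u * (2:ℝ) ^ (-(M:ℝ) * θ) := by ring
    -- main sum terms
    have hterm : ∀ i ∈ Finset.range N, ‖L (a (i+1) - a i)‖
        ≤ 16 * C * (∫ x in Ioc (t (i+1)) (t (i+2)), x ^ (-θ) * K x u / x)
          + 2 * C * ε * (2:ℝ) ^ ((M:ℝ) * θ) := by
      intro i _
      have hvE₀ : a (i+1) - a i ∈ E₀ := Submodule.sub_mem _ (ha (i+1)) (ha i)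
      have hvE₁ : a (i+1) - a i ∈ E₁ := Submodule.sub_mem _ (haE₁ (i+1)) (haE₁ i)
      have hPpos : 0 < 2 * (K (t (i+1)) u + ε) := by
        have := hKnn (i+1); linarith
      have hKmono' : K (t i) u ≤ K (t (i+1)) u :=
        hKmono _ _ u (htpos i).le (htmono i (i+1) (by omega)) hu₀
      have hv₀ : n₀ (a (i+1) - a i) ≤ 2 * (K (t (i+1)) u + ε) := by
        have h2 := hsub₀ (a (i+1)) (a i) (ha (i+1)) (ha i)
        have h3 := hn₀a (i+1)
        have h4 := hn₀a i
        linarith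
      have hvb : a (i+1) - a i = b i - b (i+1) := by
        have e1' : a (i+1) = u - b (i+1) := by rw [hab (i+1)]; abel
        have e2' : a i = u - b i := by rw [hab i]; abel
        rw [e1', e2']; abel
      have hv₁ : n₁ (a (i+1) - a i) ≤ 2 * (K (t (i+1)) u + ε) / t i := by
        rw [hvb]
        refine (hsub₁ _ _ (hb i) (hb (i+1))).trans ?_
        have h1' := hn₁b i
        have h2' := hn₁b (i+1)
        have h3' : (K (t (i+1)) u + ε) / t (i+1) ≤ (K (t (i+1)) u + ε) / t i := by
          gcongr
          · have := hKnn (i+1); linarith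
          · exact htmono i (i+1) (by omega)
        have h4' : (K (t i) u + ε) / t i ≤ (K (t (i+1)) u + ε) / t i := by
          gcongr
        calc n₁ (b i) + n₁ (b (i+1))
            ≤ (K (t i) u + ε) / t i + (K (t (i+1)) u + ε) / t (i+1) := add_le_add h1' h2'
          _ ≤ (K (t (i+1)) u + ε) / t i + (K (t (i+1)) u + ε) / t i := add_le_add h4' h3'
          _ = 2 * (K (t (i+1)) u + ε) / t i := by ring
      have hLv : ‖L (a (i+1) - a i)‖
          ≤ C * (2 * (K (t (i+1)) u + ε)) ^ (1-θ)
            * (2 * (K (t (i+1)) u + ε) / t i) ^ θ := by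
        refine (h _ (Submodule.mem_inf.2 ⟨hvE₀, hvE₁⟩)).trans ?_
        gcongr <;> first | exact h₀nonneg _ | exact h₁nonneg _ | exact hv₀ | exact hv₁ | exact Real.rpow_nonneg (h₁nonneg _) _
      have hLv2 : C * (2 * (K (t (i+1)) u + ε)) ^ (1-θ)
            * (2 * (K (t (i+1)) u + ε) / t i) ^ θ
          = C * (2 * (K (t (i+1)) u + ε)) * (t i) ^ (-θ) := by
        rw [Real.div_rpow hPpos.le (htpos i).le, Real.rpow_neg (htpos i).le,
          show C * (2 * (K (t (i+1)) u + ε)) ^ (1-θ)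
              * ((2 * (K (t (i+1)) u + ε)) ^ θ / (t i) ^ θ)
            = C * ((2 * (K (t (i+1)) u + ε)) ^ (1-θ) * (2 * (K (t (i+1)) u + ε)) ^ θ)
              * ((t i) ^ θ)⁻¹ by ring,
          ← Real.rpow_add hPpos, show (1:ℝ) - θ + θ = 1 by ring, Real.rpow_one]
      -- lower bound for the integral over the adjacent block
      have hIsub : Ioc (t (i+1)) (t (i+2)) ⊆ Ioi (0:ℝ) :=
        fun x hx => lt_trans (htpos (i+1)) hx.1
      have hintI : IntegrableOn (fun x => x ^ (-θ) * K x u / x) (Ioc (t (i+1)) (t (i+2))) :=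
        (hint u hu₀ hu₁).mono_set hIsub
      have hconst : ∀ x ∈ Ioc (t (i+1)) (t (i+2)),
          (t (i+2)) ^ (-θ) * K (t (i+1)) u / t (i+2) ≤ x ^ (-θ) * K x u / x := by
        intro x hx
        have hx0 : 0 < x := lt_trans (htpos (i+1)) hx.1
        have h1' : K (t (i+1)) u ≤ K x u := hKmono _ _ u (htpos (i+1)).le hx.1.le hu₀
        have h2' : (t (i+2)) ^ (-θ) ≤ x ^ (-θ) := by
          rw [Real.rpow_neg hx0.le, Real.rpow_neg (htpos (i+2)).le]
          have h3' : x ^ θ ≤ (t (i+2)) ^ θ := Real.rpow_le_rpow hx0.le hx.2 hθ0.le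
          exact inv_anti₀ (Real.rpow_pos_of_pos hx0 θ) h3'
        exact div_le_div₀ (mul_nonneg (Real.rpow_nonneg hx0.le _) (hK0 x u hx0.le hu₀))
          (mul_le_mul h2' h1' (hKnn (i+1)) (Real.rpow_nonneg hx0.le _)) hx0 hx.2
      have hconst_int : IntegrableOn
          (fun _ : ℝ => (t (i+2)) ^ (-θ) * K (t (i+1)) u / t (i+2))
          (Ioc (t (i+1)) (t (i+2))) := integrableOn_const measure_Ioc_lt_top.ne
      have h5 := setIntegral_mono_on hconst_int hintI measurableSet_Ioc hconst
      rw [setIntegral_const, measureReal_def, Real.volume_Ioc,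
        ENNReal.toReal_ofReal (by linarith [htmono (i+1) (i+2) (by omega)]), smul_eq_mul] at h5
      have hstep : t (i+2) - t (i+1) = t (i+1) := by
        have := htdouble (i+1); linarith
      rw [hstep] at h5
      have h6 : t (i+1) * ((t (i+2)) ^ (-θ) * K (t (i+1)) u / t (i+2))
          = (t (i+2)) ^ (-θ) * K (t (i+1)) u / 2 := by
        rw [htdouble (i+1)]
        have htne := (htpos (i+1)).ne'
        field_simp
      rw [h6] at h5
      have ht4 : t (i+2) = 4 * t i := by
        have ha' := htdouble i
        have hb' := htdouble (i+1)
        linarith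
      have ht2θ : (t i) ^ (-θ) ≤ 4 * (t (i+2)) ^ (-θ) := by
        rw [ht4, Real.mul_rpow (by norm_num) (htpos i).le]
        have h4' : (1/4 : ℝ) ≤ (4:ℝ) ^ (-θ) := by
          rw [show (1/4:ℝ) = (4:ℝ) ^ (-(1:ℝ)) by
            rw [Real.rpow_neg_one]; norm_num]
          exact Real.rpow_le_rpow_of_exponent_le (by norm_num) (by linarith)
        nlinarith [Real.rpow_nonneg (htpos i).le (-θ)]
      have hK8 : (t i) ^ (-θ) * K (t (i+1)) u
          ≤ 8 * ∫ x in Ioc (t (i+1)) (t (i+2)), x ^ (-θ) * K x u / x := by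
        nlinarith [h5, mul_le_mul_of_nonneg_right ht2θ (hKnn (i+1))]
      have htiθ : (t i) ^ (-θ) ≤ (2:ℝ) ^ ((M:ℝ) * θ) := by
        show ((2:ℝ) ^ ((i:ℝ) - M)) ^ (-θ) ≤ (2:ℝ) ^ ((M:ℝ) * θ)
        rw [← Real.rpow_mul two_pos.le]
        apply Real.rpow_le_rpow_of_exponent_le one_le_two
        nlinarith [Nat.cast_nonneg (α := ℝ) i]
      calc ‖L (a (i+1) - a i)‖
          ≤ C * (2 * (K (t (i+1)) u + ε)) * (t i) ^ (-θ) := by rw [← hLv2]; exact hLv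
        _ = 2 * C * ((t i) ^ (-θ) * K (t (i+1)) u) + 2 * C * ε * (t i) ^ (-θ) := by ring
        _ ≤ 2 * C * (8 * ∫ x in Ioc (t (i+1)) (t (i+2)), x ^ (-θ) * K x u / x)
            + 2 * C * ε * (2:ℝ) ^ ((M:ℝ) * θ) :=
            add_le_add (mul_le_mul_of_nonneg_left hK8 (by positivity))
              (mul_le_mul_of_nonneg_left htiθ (by positivity))
        _ = 16 * C * (∫ x in Ioc (t (i+1)) (t (i+2)), x ^ (-θ) * K x u / x)
            + 2 * C * ε * (2:ℝ) ^ ((M:ℝ) * θ) := by ring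
    -- summing up
    have hadj : ∀ k, k < N → IntervalIntegrable (fun x => x ^ (-θ) * K x u / x) volume
        (t (k+1)) (t (k+2)) := by
      intro k _
      rw [intervalIntegrable_iff_integrableOn_Ioc_of_le (htmono (k+1) (k+2) (by omega))]
      exact (hint u hu₀ hu₁).mono_set (fun x hx => lt_trans (htpos (k+1)) hx.1)
    have hadj2 := intervalIntegral.sum_integral_adjacent_intervals (a := fun k => t (k+1))
      (μ := volume) (f := fun x => x ^ (-θ) * K x u / x) hadj
    have hsumI : ∑ i ∈ Finset.range N, (∫ x in Ioc (t (i+1)) (t (i+2)), x ^ (-θ) * K x u / x)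
        ≤ ∫ x in Ioi (0:ℝ), x ^ (-θ) * K x u / x := by
      have hconv : ∀ i ∈ Finset.range N,
          (∫ x in Ioc (t (i+1)) (t (i+2)), x ^ (-θ) * K x u / x)
            = ∫ x in (t (i+1))..(t (i+2)), x ^ (-θ) * K x u / x :=
        fun i _ => (intervalIntegral.integral_of_le (htmono _ _ (by omega))).symm
      rw [Finset.sum_congr rfl hconv, hadj2,
        intervalIntegral.integral_of_le (htmono 1 (N+1) (by omega))]
      refine setIntegral_mono_set (hint u hu₀ hu₁) ?_ ?_
      · exact (ae_restrict_iff' measurableSet_Ioi).2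
          (ae_of_all _ (fun x hx => hfnn u hu₀ x hx))
      · exact HasSubset.Subset.eventuallyLE (fun x hx => lt_trans (htpos 1) hx.1)
    have hsum : ∑ i ∈ Finset.range N, ‖L (a (i+1) - a i)‖
        ≤ 16 * C * (∫ x in Ioi (0:ℝ), x ^ (-θ) * K x u / x) + η / 4 := by
      have hs1 := Finset.sum_le_sum hterm
      rw [Finset.sum_add_distrib, Finset.sum_const, Finset.card_range, ← Finset.mul_sum,
        nsmul_eq_mul] at hs1
      have hNB : (N:ℝ) * (2 * C * ε * (2:ℝ) ^ ((M:ℝ) * θ)) ≤ η / 4 := by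
        have hstep1 : (N:ℝ) * (2 * C * ε * (2:ℝ) ^ ((M:ℝ) * θ))
            = (4 * C * (M:ℝ) * (2:ℝ) ^ ((M:ℝ) * θ)) * ε := by
          rw [hN]; push_cast; ring
        have hstep2 : (4 * C * (M:ℝ) * (2:ℝ) ^ ((M:ℝ) * θ)) * ε ≤ D * ε := by
          apply mul_le_mul_of_nonneg_right _ hεpos.le
          rw [hD]; linarith
        have hstep3 : D * ε ≤ D * (η / 4 / D) := mul_le_mul_of_nonneg_left hεD hDpos.le
        have hstep4 : D * (η / 4 / D) = η / 4 := by field_simp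
        linarith
      have := mul_le_mul_of_nonneg_left hsumI (by positivity : (0:ℝ) ≤ 16 * C)
      linarith
    calc ‖L u‖ ≤ ‖L (a 0)‖ + ‖L (b N)‖ + ∑ i ∈ Finset.range N, ‖L (a (i+1) - a i)‖ :=
          hLdecomp
      _ ≤ (6 * C * n₁ u * (2:ℝ) ^ (-(M:ℝ) * (1-θ)))
          + (6 * C * n₀ u * (2:ℝ) ^ (-(M:ℝ) * θ))
          + (16 * C * (∫ x in Ioi (0:ℝ), x ^ (-θ) * K x u / x) + η / 4) :=
          add_le_add (add_le_add hedgeA hedgeB) hsum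
      _ ≤ 16 * C * (∫ x in Ioi (0:ℝ), x ^ (-θ) * K x u / x) + η := by
          linarith [hedge₀, hedge₁]
end

section
/- (Characteristic equation in 1D) Let k̂ : ℂ \ (-∞,0] → ℂ and let z ∈ ℂ \ (-∞,0] with sin(iz) ≠ 0. The boundary value problem z²p − p'' = 0 on (0,1), −p'(0) + z k̂(z) p(0) = 0, p'(1) + z k̂(z) p(1) = 0 has a nonzero solution p if and only if (k̂(z) − i·tan(iz/2)) · (k̂(z) + i·cot(iz/2)) = 0. -/
open Complex Set

private lemma aux_const {f g : ℝ → ℂ} {a b : ℝ}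
    (hf : ∀ x ∈ Icc a b, HasDerivWithinAt f (g x) (Icc a b) x)
    (h0 : ∀ x ∈ Ico a b, g x = 0) : ∀ x ∈ Icc a b, f x = f a := by
  intro x hx
  have h := norm_image_sub_le_of_norm_deriv_le_segment' (C := 0) hf
    (fun y hy => by simp [h0 y hy]) x hx
  rw [zero_mul] at h
  exact sub_eq_zero.mp (norm_le_zero_iff.mp h)

private lemma hd_sinh (z w : ℂ) (x : ℝ) :
    HasDerivAt (fun t : ℝ => Complex.sinh (z * t - w)) (z * Complex.cosh (z * x - w)) x := by
  have h1 : HasDerivAt (fun u : ℂ => z * u - w) z (x : ℂ) := by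
    simpa using ((hasDerivAt_id (x : ℂ)).const_mul z).sub_const w
  have h2 := (Complex.hasDerivAt_sinh (z * (x : ℂ) - w)).comp (x : ℂ) h1
  simpa [Function.comp, mul_comm] using h2.comp_ofReal

private lemma hd_cosh (z w : ℂ) (x : ℝ) :
    HasDerivAt (fun t : ℝ => Complex.cosh (z * t - w)) (z * Complex.sinh (z * x - w)) x := by
  have h1 : HasDerivAt (fun u : ℂ => z * u - w) z (x : ℂ) := by
    simpa using ((hasDerivAt_id (x : ℂ)).const_mul z).sub_const w
  have h2 := (Complex.hasDerivAt_cosh (z * (x : ℂ) - w)).comp (x : ℂ) h1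
  simpa [Function.comp, mul_comm] using h2.comp_ofReal

/-- characteristic equation in 1D: for `z ∉ (-∞,0]` with `sin(iz) ≠ 0`, the
boundary value problem `z²p − p'' = 0` on `(0,1)`, `−p'(0) + z k̂(z) p(0) = 0`,
`p'(1) + z k̂(z) p(1) = 0` has a nonzero (twice differentiable on `[0,1]`) solution iff
`(k̂(z) − i tan(iz/2))(k̂(z) + i cot(iz/2)) = 0`. -/
theorem stmt_9 (khat : ℂ → ℂ) (z : ℂ) (hz : ¬ (z.re ≤ 0 ∧ z.im = 0))
    (hsin : Complex.sin (Complex.I * z) ≠ 0) :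
    (∃ p p' p'' : ℝ → ℂ,
        (∀ x ∈ Set.Icc (0:ℝ) 1, HasDerivWithinAt p (p' x) (Set.Icc 0 1) x) ∧
        (∀ x ∈ Set.Icc (0:ℝ) 1, HasDerivWithinAt p' (p'' x) (Set.Icc 0 1) x) ∧
        (∀ x ∈ Set.Ioo (0:ℝ) 1, z^2 * p x - p'' x = 0) ∧
        (-p' 0 + z * khat z * p 0 = 0) ∧
        (p' 1 + z * khat z * p 1 = 0) ∧
        (∃ x ∈ Set.Icc (0:ℝ) 1, p x ≠ 0)) ↔
      (khat z - Complex.I * Complex.tan (Complex.I * z / 2)) *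
        (khat z + Complex.I * Complex.cot (Complex.I * z / 2)) = 0 := by
  set k := khat z with hk
  set s := Complex.sinh (z / 2) with hs_def
  set c := Complex.cosh (z / 2) with hc_def
  have hz0 : z ≠ 0 := by
    intro h
    exact hz ⟨by simp [h], by simp [h]⟩
  have hsinhz : Complex.sinh z ≠ 0 := by
    intro h
    apply hsin
    rw [mul_comm, Complex.sin_mul_I, h, zero_mul]
  have h2sc : Complex.sinh z = 2 * s * c := by
    rw [hs_def, hc_def, ← Complex.sinh_two_mul]
    congr 1
    ring
  have hcosh : Complex.cosh z = c ^ 2 + s ^ 2 := by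
    rw [hs_def, hc_def, ← Complex.cosh_two_mul]
    congr 1
    ring
  have hcs1 : c ^ 2 - s ^ 2 = 1 := Complex.cosh_sq_sub_sinh_sq (z / 2)
  have hs : s ≠ 0 := by
    intro h
    apply hsinhz
    rw [h2sc, h]; ring
  have hc : c ≠ 0 := by
    intro h
    apply hsinhz
    rw [h2sc, h]; ring
  have htan : Complex.tan (Complex.I * z / 2) = s * Complex.I / c := by
    rw [Complex.tan_eq_sin_div_cos, show Complex.I * z / 2 = (z / 2) * Complex.I by ring,
      Complex.sin_mul_I, Complex.cos_mul_I]
  have hcot : Complex.cot (Complex.I * z / 2) = c / (s * Complex.I) := by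
    rw [Complex.cot_eq_cos_div_sin, show Complex.I * z / 2 = (z / 2) * Complex.I by ring,
      Complex.sin_mul_I, Complex.cos_mul_I]
  have hRiff : ((k - Complex.I * Complex.tan (Complex.I * z / 2)) *
      (k + Complex.I * Complex.cot (Complex.I * z / 2)) = 0) ↔
      ((k * c + s) * (k * s + c) = 0) := by
    rw [htan, hcot]
    have h1 : Complex.I * (s * Complex.I / c) = -s / c := by
      rw [show Complex.I * (s * Complex.I / c) = s * (Complex.I * Complex.I) / c by ring,
        Complex.I_mul_I]
      ring
    have h2 : Complex.I * (c / (s * Complex.I)) = c / s := by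
      rw [show Complex.I * (c / (s * Complex.I)) = c * Complex.I / (s * Complex.I) by ring,
        mul_div_mul_right _ _ Complex.I_ne_zero]
    have hprod : (k - Complex.I * (s * Complex.I / c)) * (k + Complex.I * (c / (s * Complex.I)))
        = ((k * c + s) * (k * s + c)) / (c * s) := by
      rw [h1, h2]
      field_simp
      ring
    rw [hprod, div_eq_zero_iff]
    exact or_iff_left (mul_ne_zero hc hs)
  rw [hRiff]
  constructor
  · rintro ⟨p, p', p'', hp, hp', hode, hbc0, hbc1, x₀, hx₀, hpx₀⟩
    have hode' : ∀ x ∈ Ioo (0:ℝ) 1, p'' x = z ^ 2 * p x := by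
      intro x hx
      linear_combination -hode x hx
    have DW : ∀ w : ℂ, ∀ x ∈ Icc (0:ℝ) 1,
        HasDerivWithinAt
          (fun t : ℝ => p' t * Complex.sinh (z * t - w) - p t * (z * Complex.cosh (z * t - w)))
          ((p'' x - z ^ 2 * p x) * Complex.sinh (z * x - w)) (Icc 0 1) x := by
      intro w x hx
      have h1 := (hp' x hx).mul (hd_sinh z w x).hasDerivWithinAt
      have h2 := (hp x hx).mul ((hd_cosh z w x).const_mul z).hasDerivWithinAt
      refine (h1.sub h2).congr_deriv ?_
      ring
    -- constancy of the Wronskian with sinh(z t)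
    have hC0 : ∀ x ∈ Icc (0:ℝ) 1,
        p' x * Complex.sinh (z * x) - p x * (z * Complex.cosh (z * x)) = -(p 0 * z) := by
      have DW0 : ∀ x ∈ Icc (0:ℝ) 1,
          HasDerivWithinAt
            (fun t : ℝ => p' t * Complex.sinh (z * t) - p t * (z * Complex.cosh (z * t)))
            ((p'' x - z ^ 2 * p x) * Complex.sinh (z * x)) (Icc 0 1) x := by
        intro x hx
        simpa using DW 0 x hx
      have hb : ∀ x ∈ Ico (0:ℝ) 1, (p'' x - z ^ 2 * p x) * Complex.sinh (z * x) = 0 := by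
        intro x hx
        rcases eq_or_lt_of_le hx.1 with h0 | h0
        · simp [← h0]
        · rw [hode' x ⟨h0, hx.2⟩]
          ring
      intro x hx
      have h := aux_const DW0 hb x hx
      simpa using h
    -- constancy of the Wronskian with sinh(z t - z)
    have hI : ∀ x ∈ Ioo (0:ℝ) 1,
        (fun t : ℝ => p' t * Complex.sinh (z * t - z) - p t * (z * Complex.cosh (z * t - z))) x
        = (fun t : ℝ => p' t * Complex.sinh (z * t - z) - p t * (z * Complex.cosh (z * t - z))) 1 := by
      intro x hx
      have hsub : Icc x 1 ⊆ Icc (0:ℝ) 1 := Icc_subset_Icc hx.1.le le_rfl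
      have h := aux_const (f := fun t : ℝ =>
          p' t * Complex.sinh (z * t - z) - p t * (z * Complex.cosh (z * t - z)))
        (g := fun y => (p'' y - z ^ 2 * p y) * Complex.sinh (z * y - z))
        (a := x) (b := 1)
        (fun y hy => (DW z y (hsub hy)).mono hsub)
        (fun y hy => by
          show (p'' y - z ^ 2 * p y) * Complex.sinh (z * y - z) = 0
          rw [hode' y ⟨lt_of_lt_of_le hx.1 hy.1, hy.2⟩]; ring)
      exact (h 1 (right_mem_Icc.mpr hx.2.le)).symm
    have hC1 : ∀ x ∈ Icc (0:ℝ) 1,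
        p' x * Complex.sinh (z * x - z) - p x * (z * Complex.cosh (z * x - z)) = -(p 1 * z) := by
      have hW11 : (fun t : ℝ =>
          p' t * Complex.sinh (z * t - z) - p t * (z * Complex.cosh (z * t - z))) 1
          = -(p 1 * z) := by
        simp
      intro x hx
      rcases eq_or_lt_of_le hx.1 with h0 | h0
      · -- x = 0 : continuity argument
        have hcont : ContinuousWithinAt
            (fun t : ℝ => p' t * Complex.sinh (z * t - z) - p t * (z * Complex.cosh (z * t - z)))
            (Icc (0:ℝ) 1) 0 :=
          (DW z 0 ⟨le_rfl, zero_le_one⟩).continuousWithinAt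
        haveI hnb : (nhdsWithin (0:ℝ) (Ioo (0:ℝ) 1)).NeBot := by
          apply mem_closure_iff_nhdsWithin_neBot.mp
          rw [closure_Ioo (by norm_num : (0:ℝ) ≠ 1)]
          exact ⟨le_rfl, zero_le_one⟩
        have t1 := (hcont.mono Ioo_subset_Icc_self)
        have t2 : Filter.Tendsto
            (fun t : ℝ => p' t * Complex.sinh (z * t - z) - p t * (z * Complex.cosh (z * t - z)))
            (nhdsWithin (0:ℝ) (Ioo (0:ℝ) 1))
            (nhds ((fun t : ℝ =>
              p' t * Complex.sinh (z * t - z) - p t * (z * Complex.cosh (z * t - z))) 1)) := by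
          refine Filter.Tendsto.congr'
            (Filter.eventuallyEq_of_mem self_mem_nhdsWithin fun y hy => (hI y hy).symm)
            tendsto_const_nhds
        have := tendsto_nhds_unique t1 t2
        rw [← h0]
        simpa [hW11] using this
      rcases eq_or_lt_of_le hx.2 with h1 | h1
      · rw [h1]
        simp [hW11]
      · have h := hI x ⟨h0, h1⟩
        simp only at h
        rw [h]
        simp [hW11]
    -- endpoint evaluations
    have e1 : p' 1 * Complex.sinh z - p 1 * (z * Complex.cosh z) = -(p 0 * z) := by
      simpa using hC0 1 ⟨zero_le_one, le_rfl⟩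
    have e2 : -(p' 0 * Complex.sinh z) - p 0 * (z * Complex.cosh z) = -(p 1 * z) := by
      have := hC1 0 ⟨le_rfl, zero_le_one⟩
      simpa [Complex.sinh_neg, Complex.cosh_neg] using this
    -- the two boundary relations
    have hB : p 1 = p 0 * (k * Complex.sinh z + Complex.cosh z) := by
      refine mul_right_cancel₀ hz0 ?_
      linear_combination e2 - Complex.sinh z * hbc0
    have hA : p 0 = p 1 * (k * Complex.sinh z + Complex.cosh z) := by
      refine mul_right_cancel₀ hz0 ?_
      linear_combination e1 - Complex.sinh z * hbc1
    -- nondegeneracy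
    have hpzero : p 0 = 0 → p 1 = 0 → p x₀ = 0 := by
      intro h0 h1
      have q1 := hC0 x₀ hx₀
      have q2 := hC1 x₀ hx₀
      rw [h0] at q1
      rw [h1] at q2
      have hid : Complex.sinh (-z) =
          Complex.sinh (z * x₀ - z) * Complex.cosh (z * x₀)
            - Complex.cosh (z * x₀ - z) * Complex.sinh (z * x₀) := by
        rw [show -z = (z * (x₀:ℂ) - z) - z * (x₀:ℂ) by ring]
        exact Complex.sinh_sub _ _
      have hcomb : p x₀ * (z * Complex.sinh (-z)) = 0 := by
        linear_combination (-(Complex.sinh (z * (x₀:ℂ) - z))) * q1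
          + Complex.sinh (z * (x₀:ℂ)) * q2 + (p x₀ * z) * hid
      have hzs : z * Complex.sinh (-z) ≠ 0 := by
        rw [Complex.sinh_neg]
        exact mul_ne_zero hz0 (neg_ne_zero.mpr hsinhz)
      exact (mul_eq_zero.mp hcomb).resolve_right hzs
    have hA0 : p 0 ≠ 0 := by
      intro h0
      have h1 : p 1 = 0 := by rw [hB, h0, zero_mul]
      exact hpx₀ (hpzero h0 h1)
    have hm : (k * Complex.sinh z + Complex.cosh z) ^ 2 = 1 := by
      refine mul_left_cancel₀ hA0 ?_
      calc p 0 * (k * Complex.sinh z + Complex.cosh z) ^ 2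
          = p 0 * 1 := by linear_combination -hA - (k * Complex.sinh z + Complex.cosh z) * hB
        _ = p 0 * 1 := rfl
    rw [h2sc, hcosh] at hm
    have h4 : (4 * s * c) * ((k * c + s) * (k * s + c)) = 0 := by
      linear_combination hm - (c ^ 2 - s ^ 2 + 1) * hcs1
    have h4ne : (4:ℂ) * s * c ≠ 0 := mul_ne_zero (mul_ne_zero (by norm_num) hs) hc
    exact (mul_eq_zero.mp h4).resolve_left h4ne
  · intro hchar
    refine ⟨fun t : ℝ => Complex.cosh (z * t) + k * Complex.sinh (z * t),
      fun t : ℝ => z * Complex.sinh (z * t) + k * (z * Complex.cosh (z * t)),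
      fun t : ℝ => z * (z * Complex.cosh (z * t)) + k * (z * (z * Complex.sinh (z * t))),
      ?_, ?_, ?_, ?_, ?_, ?_⟩
    · intro x hx
      have h := ((hd_cosh z 0 x).add ((hd_sinh z 0 x).const_mul k)).hasDerivWithinAt
        (s := Icc (0:ℝ) 1)
      simpa only [sub_zero, Pi.add_def] using h
    · intro x hx
      have h := (((hd_sinh z 0 x).const_mul z).add
        (((hd_cosh z 0 x).const_mul z).const_mul k)).hasDerivWithinAt (s := Icc (0:ℝ) 1)
      simpa only [sub_zero, Pi.add_def] using h
    · intro x hx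
      ring
    · simp only [Complex.ofReal_zero, mul_zero, Complex.sinh_zero, Complex.cosh_zero, mul_one,
        add_zero, zero_add]
      ring
    · simp only [Complex.ofReal_one, mul_one]
      linear_combination 2 * z * hchar + z * (1 + k ^ 2) * h2sc + 2 * k * z * hcosh
    · exact ⟨0, ⟨le_rfl, zero_le_one⟩, by simp⟩
end

section
/- (Boundary values of spectral clusters on the square, lower bound) Let Q = (0,π)² and let u_{m,n}(x,y) = 2cos(mx)cos(ny) (suitably normalized for m = 0 or n = 0) be the L²-normalized Neumann eigenfunctions with eigenfrequencies λ_{m,n} = √(m²+n²). There is δ₀ > 0 such that for 0 < δ ≤ δ₀ and every L²(Q)-normalized finite linear combination p = Σ a_{m,n} u_{m,n} whose frequencies λ_{m,n} (with a_{m,n} ≠ 0) all lie in an interval of length δ, one has ∫_{∂Q} |p|² dS ≥ c with a constant c > 0 independent of p. -/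
open Real

noncomputable def ee (m : ℕ) : ℝ := if m = 0 then π else π / 2

lemma ee_pos (m : ℕ) : 0 < ee m := by
  unfold ee; split
  · exact pi_pos
  · positivity

lemma ee_le (m : ℕ) : ee m ≤ π := by
  unfold ee; split
  · exact le_refl _
  · linarith [pi_pos]

lemma ee_ge (m : ℕ) : π / 2 ≤ ee m := by
  unfold ee; split
  · linarith [pi_pos]
  · exact le_refl _

open intervalIntegral in
lemma int_cos_int (c : ℤ) :
    ∫ x in (0:ℝ)..π, Real.cos (c * x) = if c = 0 then π else 0 := by
  rcases eq_or_ne c 0 with h | h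
  · simp [h]
  · have hc : (c : ℝ) ≠ 0 := Int.cast_ne_zero.mpr h
    rw [if_neg h, intervalIntegral.integral_comp_mul_left Real.cos hc]
    simp [integral_cos, Real.sin_int_mul_pi]

lemma int_cos_cos (m k : ℕ) :
    ∫ x in (0:ℝ)..π, Real.cos (m * x) * Real.cos (k * x)
      = if m = k then ee m else 0 := by
  have hid : ∀ x : ℝ, Real.cos (m * x) * Real.cos (k * x)
      = (Real.cos ((((m:ℤ) - (k:ℤ)) : ℤ) * x) + Real.cos ((((m:ℤ) + (k:ℤ)) : ℤ) * x)) / 2 := by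
    intro x
    push_cast
    rw [sub_mul, add_mul, Real.cos_sub, Real.cos_add]
    ring
  have hint : ∀ c : ℤ, IntervalIntegrable (fun x : ℝ => Real.cos (c * x)) MeasureTheory.volume 0 π :=
    fun c => (Real.continuous_cos.comp (continuous_const.mul continuous_id)).intervalIntegrable _ _
  calc ∫ x in (0:ℝ)..π, Real.cos (m * x) * Real.cos (k * x)
      = ∫ x in (0:ℝ)..π, (Real.cos ((((m:ℤ) - (k:ℤ)) : ℤ) * x) + Real.cos ((((m:ℤ) + (k:ℤ)) : ℤ) * x)) / 2 := by
        simp_rw [hid]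
    _ = ((∫ x in (0:ℝ)..π, Real.cos ((((m:ℤ) - (k:ℤ)) : ℤ) * x))
        + ∫ x in (0:ℝ)..π, Real.cos ((((m:ℤ) + (k:ℤ)) : ℤ) * x)) / 2 := by
        rw [intervalIntegral.integral_div, intervalIntegral.integral_add (hint _) (hint _)]
    _ = ((if ((m:ℤ) - (k:ℤ)) = 0 then π else 0) + (if ((m:ℤ) + (k:ℤ)) = 0 then π else 0)) / 2 := by
        rw [int_cos_int, int_cos_int]
    _ = if m = k then ee m else 0 := by
        rcases eq_or_ne m k with h | h
        · subst h
          rcases eq_or_ne m 0 with h0 | h0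
          · subst h0; simp [ee]
          · have : ¬ ((m:ℤ) + (m:ℤ) = 0) := by
              intro hh
              have : (m:ℤ) = 0 := by omega
              exact h0 (by exact_mod_cast this)
            simp [this, ee, h0]
        · have h1 : ¬ ((m:ℤ) - (k:ℤ) = 0) := by
            intro hh; exact h (by omega)
          have h2 : ¬ ((m:ℤ) + (k:ℤ) = 0) := by
            intro hh
            have hm : (m:ℤ) = 0 := by omega
            have hk : (k:ℤ) = 0 := by omega
            exact h (by omega)
          simp [h1, h2, h]

set_option maxHeartbeats 1000000 in
lemma int_sum_sq (N : Finset ℕ) (g : ℕ → ℝ) :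
    ∫ y in (0:ℝ)..π, (∑ n ∈ N, g n * Real.cos (n * y))^2
      = ∑ n ∈ N, (g n)^2 * ee n := by
  have hexp : ∀ y : ℝ, (∑ n ∈ N, g n * Real.cos (n * y))^2
      = ∑ n ∈ N, ∑ k ∈ N, (g n * g k) * (Real.cos (n * y) * Real.cos (k * y)) := by
    intro y
    rw [sq, Finset.sum_mul_sum]
    exact Finset.sum_congr rfl fun n _ => Finset.sum_congr rfl fun k _ => by ring
  have hcont : ∀ (n k : ℕ), IntervalIntegrable
      (fun y : ℝ => (g n * g k) * (Real.cos (n * y) * Real.cos (k * y)))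
      MeasureTheory.volume 0 π := by
    intro n k
    exact (continuous_const.mul ((Real.continuous_cos.comp (continuous_const.mul continuous_id)).mul
      (Real.continuous_cos.comp (continuous_const.mul continuous_id)))).intervalIntegrable _ _
  calc ∫ y in (0:ℝ)..π, (∑ n ∈ N, g n * Real.cos (n * y))^2
      = ∫ y in (0:ℝ)..π, ∑ n ∈ N, ∑ k ∈ N, (g n * g k) * (Real.cos (n * y) * Real.cos (k * y)) := by
        simp_rw [hexp]
    _ = ∑ n ∈ N, ∫ y in (0:ℝ)..π, ∑ k ∈ N, (g n * g k) * (Real.cos (n * y) * Real.cos (k * y)) :=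
        intervalIntegral.integral_finset_sum (fun n _ =>
          ((continuous_finset_sum N (fun k _ => continuous_const.mul
            ((Real.continuous_cos.comp (continuous_const.mul continuous_id)).mul
             (Real.continuous_cos.comp (continuous_const.mul continuous_id))))).intervalIntegrable _ _))
    _ = ∑ n ∈ N, ∑ k ∈ N, ∫ y in (0:ℝ)..π, (g n * g k) * (Real.cos (n * y) * Real.cos (k * y)) :=
        Finset.sum_congr rfl fun n _ =>
          intervalIntegral.integral_finset_sum (fun k _ => hcont n k)
    _ = ∑ n ∈ N, ∑ k ∈ N, (if n = k then (g n * g k) * ee n else 0) := by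
        refine Finset.sum_congr rfl fun n _ => Finset.sum_congr rfl fun k _ => ?_
        rw [intervalIntegral.integral_const_mul, int_cos_cos]
        split <;> simp
    _ = ∑ n ∈ N, (g n)^2 * ee n := by
        refine Finset.sum_congr rfl fun n hn => ?_
        rw [Finset.sum_ite_eq N n (fun k => (g n * g k) * ee n), if_pos hn]
        ring

lemma expand_snd (T : Finset (ℕ × ℕ)) (b : ℕ × ℕ → ℝ) (y : ℝ) :
    ∑ q ∈ T, b q * Real.cos (q.2 * y)
      = ∑ n ∈ T.image Prod.snd, (∑ q ∈ T.filter (fun q => q.2 = n), b q) * Real.cos (n * y) := by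
  rw [← Finset.sum_fiberwise_of_maps_to (fun q hq => Finset.mem_image_of_mem Prod.snd hq)
    (fun q => b q * Real.cos (q.2 * y))]
  refine Finset.sum_congr rfl fun n _ => ?_
  rw [Finset.sum_mul]
  refine Finset.sum_congr rfl fun q hq => ?_
  rw [(Finset.mem_filter.mp hq).2]

lemma int_edge_snd (T : Finset (ℕ × ℕ)) (b : ℕ × ℕ → ℝ) :
    ∫ y in (0:ℝ)..π, (∑ q ∈ T, b q * Real.cos (q.2 * y))^2
      = ∑ n ∈ T.image Prod.snd, (∑ q ∈ T.filter (fun q => q.2 = n), b q)^2 * ee n := by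
  simp_rw [expand_snd T b]
  exact int_sum_sq _ _

lemma expand_fst (T : Finset (ℕ × ℕ)) (b : ℕ × ℕ → ℝ) (x : ℝ) :
    ∑ q ∈ T, b q * Real.cos (q.1 * x)
      = ∑ m ∈ T.image Prod.fst, (∑ q ∈ T.filter (fun q => q.1 = m), b q) * Real.cos (m * x) := by
  rw [← Finset.sum_fiberwise_of_maps_to (fun q hq => Finset.mem_image_of_mem Prod.fst hq)
    (fun q => b q * Real.cos (q.1 * x))]
  refine Finset.sum_congr rfl fun m _ => ?_
  rw [Finset.sum_mul]
  refine Finset.sum_congr rfl fun q hq => ?_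
  rw [(Finset.mem_filter.mp hq).2]

lemma int_edge_fst (T : Finset (ℕ × ℕ)) (b : ℕ × ℕ → ℝ) :
    ∫ x in (0:ℝ)..π, (∑ q ∈ T, b q * Real.cos (q.1 * x))^2
      = ∑ m ∈ T.image Prod.fst, (∑ q ∈ T.filter (fun q => q.1 = m), b q)^2 * ee m := by
  simp_rw [expand_fst T b]
  exact int_sum_sq _ _

lemma fiber_sum_sq (T : Finset (ℕ × ℕ)) (a : ℕ × ℕ → ℝ) (n : ℕ) :
    (∫ x in (0:ℝ)..π, (∑ q ∈ T.filter (fun q => q.2 = n), a q * Real.cos (q.1 * x))^2)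
      = ∑ q ∈ T.filter (fun q => q.2 = n), (a q)^2 * ee q.1 := by
  classical
  set F := T.filter (fun q => q.2 = n) with hF
  have hinj : ∀ q ∈ F, ∀ q' ∈ F, q.1 = q'.1 → q = q' := by
    intro q hq q' hq' h1
    have h2 : q.2 = n := (Finset.mem_filter.mp hq).2
    have h2' : q'.2 = n := (Finset.mem_filter.mp hq').2
    exact Prod.ext h1 (h2.trans h2'.symm)
  have hq_eq : ∀ q ∈ F, (q.1, n) = q := by
    intro q hq
    have h2 : q.2 = n := (Finset.mem_filter.mp hq).2
    exact Prod.ext rfl h2.symm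
  have him : ∀ x : ℝ, (∑ q ∈ F, a q * Real.cos (q.1 * x))
      = ∑ m ∈ F.image Prod.fst, a (m, n) * Real.cos (m * x) := by
    intro x
    rw [Finset.sum_image (g := Prod.fst) (f := fun m => a (m, n) * Real.cos (m * x))
      (fun q hq q' hq' h => hinj q hq q' hq' h)]
    refine Finset.sum_congr rfl fun q hq => ?_
    rw [hq_eq q hq]
  simp_rw [him]
  rw [int_sum_sq]
  rw [Finset.sum_image (g := Prod.fst) (f := fun m => a (m, n) ^ 2 * ee m)
    (fun q hq q' hq' h => hinj q hq q' hq' h)]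
  refine Finset.sum_congr rfl fun q hq => ?_
  rw [hq_eq q hq]

lemma int_double (T : Finset (ℕ × ℕ)) (a : ℕ × ℕ → ℝ) :
    (∫ x in (0:ℝ)..π, ∫ y in (0:ℝ)..π,
        (∑ q ∈ T, a q * Real.cos (q.1 * x) * Real.cos (q.2 * y))^2)
      = ∑ q ∈ T, (a q)^2 * (ee q.1 * ee q.2) := by
  classical
  have inner : ∀ x : ℝ, (∫ y in (0:ℝ)..π,
        (∑ q ∈ T, a q * Real.cos (q.1 * x) * Real.cos (q.2 * y))^2)
      = ∑ n ∈ T.image Prod.snd,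
          (∑ q ∈ T.filter (fun q => q.2 = n), a q * Real.cos (q.1 * x))^2 * ee n := by
    intro x
    exact int_edge_snd T (fun q => a q * Real.cos (q.1 * x))
  calc (∫ x in (0:ℝ)..π, ∫ y in (0:ℝ)..π,
        (∑ q ∈ T, a q * Real.cos (q.1 * x) * Real.cos (q.2 * y))^2)
      = ∫ x in (0:ℝ)..π, ∑ n ∈ T.image Prod.snd,
          (∑ q ∈ T.filter (fun q => q.2 = n), a q * Real.cos (q.1 * x))^2 * ee n := by
        refine intervalIntegral.integral_congr fun x _ => inner x
    _ = ∑ n ∈ T.image Prod.snd, ∫ x in (0:ℝ)..π,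
          (∑ q ∈ T.filter (fun q => q.2 = n), a q * Real.cos (q.1 * x))^2 * ee n :=
        intervalIntegral.integral_finset_sum (fun n _ =>
          (((continuous_finset_sum _ (fun q _ => continuous_const.mul
            (Real.continuous_cos.comp (continuous_const.mul continuous_id)))).pow 2).mul
            continuous_const).intervalIntegrable _ _)
    _ = ∑ n ∈ T.image Prod.snd,
          (∑ q ∈ T.filter (fun q => q.2 = n), (a q)^2 * ee q.1) * ee n := by
        refine Finset.sum_congr rfl fun n _ => ?_
        rw [intervalIntegral.integral_mul_const, fiber_sum_sq]
    _ = ∑ n ∈ T.image Prod.snd, ∑ q ∈ T.filter (fun q => q.2 = n),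
          (a q)^2 * (ee q.1 * ee q.2) := by
        refine Finset.sum_congr rfl fun n _ => ?_
        rw [Finset.sum_mul]
        refine Finset.sum_congr rfl fun q hq => ?_
        rw [(Finset.mem_filter.mp hq).2]
        ring
    _ = ∑ q ∈ T, (a q)^2 * (ee q.1 * ee q.2) :=
        Finset.sum_fiberwise_of_maps_to (fun q hq => Finset.mem_image_of_mem Prod.snd hq) _

set_option maxHeartbeats 800000 in
lemma unique_ge {δ s₀ : ℝ} (hδ0 : 0 < δ) (hδ : δ ≤ 1/4) {m n m' : ℕ} (hnm : n ≤ m)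
    (h1 : s₀ ≤ Real.sqrt ((m:ℝ)^2 + (n:ℝ)^2)) (h2 : Real.sqrt ((m:ℝ)^2 + (n:ℝ)^2) ≤ s₀ + δ)
    (h1' : s₀ ≤ Real.sqrt ((m':ℝ)^2 + (n:ℝ)^2)) (h2' : Real.sqrt ((m':ℝ)^2 + (n:ℝ)^2) ≤ s₀ + δ) :
    m' = m := by
  by_contra hne
  set M : ℝ := max s₀ 0 with hMdef
  have hM0 : (0:ℝ) ≤ M := le_max_right _ _
  have hs₀M : s₀ ≤ M := le_max_left _ _
  have hv : (0:ℝ) ≤ (m:ℝ)^2 + (n:ℝ)^2 := by positivity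
  have hv' : (0:ℝ) ≤ (m':ℝ)^2 + (n:ℝ)^2 := by positivity
  have hs : Real.sqrt ((m:ℝ)^2 + (n:ℝ)^2) ^ 2 = (m:ℝ)^2 + (n:ℝ)^2 := Real.sq_sqrt hv
  have hs' : Real.sqrt ((m':ℝ)^2 + (n:ℝ)^2) ^ 2 = (m':ℝ)^2 + (n:ℝ)^2 := Real.sq_sqrt hv'
  have hM1 : M ≤ Real.sqrt ((m:ℝ)^2 + (n:ℝ)^2) := max_le h1 (Real.sqrt_nonneg _)
  have hM1' : M ≤ Real.sqrt ((m':ℝ)^2 + (n:ℝ)^2) := max_le h1' (Real.sqrt_nonneg _)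
  have e1 : M^2 ≤ (m:ℝ)^2 + (n:ℝ)^2 := (pow_le_pow_left₀ hM0 hM1 2).trans_eq hs
  have e1' : M^2 ≤ (m':ℝ)^2 + (n:ℝ)^2 := (pow_le_pow_left₀ hM0 hM1' 2).trans_eq hs'
  have hup : Real.sqrt ((m:ℝ)^2 + (n:ℝ)^2) ≤ M + δ := h2.trans (by linarith)
  have hup' : Real.sqrt ((m':ℝ)^2 + (n:ℝ)^2) ≤ M + δ := h2'.trans (by linarith)
  have e2 : (m:ℝ)^2 + (n:ℝ)^2 ≤ (M + δ)^2 :=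
    hs ▸ pow_le_pow_left₀ (Real.sqrt_nonneg _) hup 2
  have e2' : (m':ℝ)^2 + (n:ℝ)^2 ≤ (M + δ)^2 :=
    hs' ▸ pow_le_pow_left₀ (Real.sqrt_nonneg _) hup' 2
  -- separation
  have hsep : (m:ℝ) + (m':ℝ) ≤ 2*M*δ + δ^2 := by
    rcases lt_or_gt_of_ne hne with hlt | hlt
    · -- m' < m : m^2 - m'^2 ≥ m + m'
      have hc : (m':ℝ) + 1 ≤ (m:ℝ) := by exact_mod_cast Nat.succ_le_of_lt hlt
      nlinarith [Nat.cast_nonneg (α := ℝ) m', Nat.cast_nonneg (α := ℝ) m]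
    · have hc : (m:ℝ) + 1 ≤ (m':ℝ) := by exact_mod_cast Nat.succ_le_of_lt hlt
      nlinarith [Nat.cast_nonneg (α := ℝ) m', Nat.cast_nonneg (α := ℝ) m]
  have hone : (1:ℝ) ≤ (m:ℝ) + (m':ℝ) := by
    have : 1 ≤ m + m' := by omega
    exact_mod_cast this
  have hdiag : M^2 ≤ 2*(m:ℝ)^2 := by
    have hcast : (n:ℝ) ≤ (m:ℝ) := by exact_mod_cast hnm
    have : (n:ℝ)^2 ≤ (m:ℝ)^2 := pow_le_pow_left₀ (Nat.cast_nonneg _) hcast 2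
    linarith
  have hδsq : δ^2 ≤ 1/16 := by nlinarith
  have hm' : (0:ℝ) ≤ (m':ℝ) := Nat.cast_nonneg _
  have hm : (0:ℝ) ≤ (m:ℝ) := Nat.cast_nonneg _
  rcases le_total M 1 with hM | hM
  · have : 2*M*δ ≤ 1/2 := by nlinarith [mul_nonneg hM0 hδ0.le]
    linarith
  · have h2Mδ : 2*M*δ ≤ M/2 := by nlinarith
    have h3 : (m:ℝ) ≤ 9*M/16 := by nlinarith
    have h4 : (m:ℝ)*(m:ℝ) ≤ (9*M/16)*(9*M/16) := mul_self_le_mul_self hm h3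
    nlinarith

set_option maxHeartbeats 1000000 in
/-- boundary values of spectral clusters on the square, lower bound:
on `Q = (0,π)²`, there are `δ₀, c > 0` such that every `L²(Q)`-normalized spectral cluster
`p = Σ a_{m,n} cos(mx)cos(ny)` of width `δ ≤ δ₀` (all frequencies `√(m²+n²)` with nonzero
coefficient lying in an interval of length `δ`) satisfies `∫_{∂Q} |p|² dS ≥ c`. -/
theorem stmt_12 :
    ∃ δ₀ : ℝ, 0 < δ₀ ∧ ∃ c : ℝ, 0 < c ∧
      ∀ δ : ℝ, 0 < δ → δ ≤ δ₀ →
      ∀ (A : Finset (ℕ × ℕ)) (a : ℕ × ℕ → ℝ) (s₀ : ℝ),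
        (∀ mn ∈ A, a mn ≠ 0 →
          s₀ ≤ Real.sqrt ((mn.1 : ℝ)^2 + (mn.2 : ℝ)^2) ∧
          Real.sqrt ((mn.1 : ℝ)^2 + (mn.2 : ℝ)^2) ≤ s₀ + δ) →
        (∀ p : ℝ → ℝ → ℝ,
          (∀ x y : ℝ, p x y = ∑ mn ∈ A, a mn * Real.cos (mn.1 * x) * Real.cos (mn.2 * y)) →
          (∫ x in (0:ℝ)..π, ∫ y in (0:ℝ)..π, (p x y)^2) = 1 →
          c ≤ (∫ y in (0:ℝ)..π, (p 0 y)^2 + (p π y)^2) +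
              (∫ x in (0:ℝ)..π, (p x 0)^2 + (p x π)^2)) := by
  classical
  refine ⟨1/4, by norm_num, 1/π, by positivity, ?_⟩
  intro δ hδ0 hδ A a s₀ hfreq p hp hnorm
  set T := A.filter (fun q => a q ≠ 0) with hTdef
  have hTfreq : ∀ q ∈ T, s₀ ≤ Real.sqrt ((q.1:ℝ)^2 + (q.2:ℝ)^2) ∧
      Real.sqrt ((q.1:ℝ)^2 + (q.2:ℝ)^2) ≤ s₀ + δ := by
    intro q hq
    obtain ⟨hqA, hqa⟩ := Finset.mem_filter.mp hq
    exact hfreq q hqA hqa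
  have hpT : ∀ x y : ℝ, p x y = ∑ q ∈ T, a q * Real.cos (q.1 * x) * Real.cos (q.2 * y) := by
    intro x y
    rw [hp x y, hTdef]
    exact (Finset.sum_filter_of_ne
      (f := fun q : ℕ × ℕ => a q * Real.cos (q.1 * x) * Real.cos (q.2 * y))
      (p := fun q => a q ≠ 0)
      (fun q _ hne h0 => hne (by show a q * Real.cos (q.1 * x) * Real.cos (q.2 * y) = 0; rw [h0]; ring))).symm
  -- normalization
  have hnorm' : ∑ q ∈ T, (a q)^2 * (ee q.1 * ee q.2) = 1 := by
    rw [← int_double T a, ← hnorm]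
    refine intervalIntegral.integral_congr fun x _ => ?_
    refine intervalIntegral.integral_congr fun y _ => ?_
    rw [hpT]
  -- boundary edge in y
  have hY : (∫ y in (0:ℝ)..π, (p 0 y)^2 + (p π y)^2)
      = ∑ n ∈ T.image Prod.snd,
          ((∑ q ∈ T.filter (fun q => q.2 = n), a q * Real.cos (q.1 * (0:ℝ)))^2
          + (∑ q ∈ T.filter (fun q => q.2 = n), a q * Real.cos (q.1 * π))^2) * ee n := by
    have h1 : ∀ y : ℝ, (p 0 y)^2 + (p π y)^2 =
        (∑ q ∈ T, (a q * Real.cos (q.1 * (0:ℝ))) * Real.cos (q.2 * y))^2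
        + (∑ q ∈ T, (a q * Real.cos (q.1 * π)) * Real.cos (q.2 * y))^2 := by
      intro y; rw [hpT, hpT]
    have hc1 : Continuous (fun y : ℝ =>
        (∑ q ∈ T, (a q * Real.cos (q.1 * (0:ℝ))) * Real.cos (q.2 * y))^2) :=
      (continuous_finset_sum _ (fun q _ => continuous_const.mul
        (Real.continuous_cos.comp (continuous_const.mul continuous_id)))).pow 2
    have hc2 : Continuous (fun y : ℝ =>
        (∑ q ∈ T, (a q * Real.cos (q.1 * π)) * Real.cos (q.2 * y))^2) :=
      (continuous_finset_sum _ (fun q _ => continuous_const.mul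
        (Real.continuous_cos.comp (continuous_const.mul continuous_id)))).pow 2
    rw [intervalIntegral.integral_congr (g := fun y =>
        (∑ q ∈ T, (a q * Real.cos (q.1 * (0:ℝ))) * Real.cos (q.2 * y))^2
        + (∑ q ∈ T, (a q * Real.cos (q.1 * π)) * Real.cos (q.2 * y))^2)
        (fun y _ => h1 y),
      intervalIntegral.integral_add (hc1.intervalIntegrable _ _) (hc2.intervalIntegrable _ _),
      int_edge_snd T (fun q => a q * Real.cos (q.1 * (0:ℝ))),
      int_edge_snd T (fun q => a q * Real.cos (q.1 * π)),
      ← Finset.sum_add_distrib]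
    exact Finset.sum_congr rfl fun n _ => by ring
  -- boundary edge in x
  have hX : (∫ x in (0:ℝ)..π, (p x 0)^2 + (p x π)^2)
      = ∑ m ∈ T.image Prod.fst,
          ((∑ q ∈ T.filter (fun q => q.1 = m), a q * Real.cos (q.2 * (0:ℝ)))^2
          + (∑ q ∈ T.filter (fun q => q.1 = m), a q * Real.cos (q.2 * π))^2) * ee m := by
    have h1 : ∀ x : ℝ, (p x 0)^2 + (p x π)^2 =
        (∑ q ∈ T, (a q * Real.cos (q.2 * (0:ℝ))) * Real.cos (q.1 * x))^2
        + (∑ q ∈ T, (a q * Real.cos (q.2 * π)) * Real.cos (q.1 * x))^2 := by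
      intro x; rw [hpT, hpT]
      congr 1
      · congr 1
        exact Finset.sum_congr rfl fun q _ => by ring
      · congr 1
        exact Finset.sum_congr rfl fun q _ => by ring
    have hc1 : Continuous (fun x : ℝ =>
        (∑ q ∈ T, (a q * Real.cos (q.2 * (0:ℝ))) * Real.cos (q.1 * x))^2) :=
      (continuous_finset_sum _ (fun q _ => continuous_const.mul
        (Real.continuous_cos.comp (continuous_const.mul continuous_id)))).pow 2
    have hc2 : Continuous (fun x : ℝ =>
        (∑ q ∈ T, (a q * Real.cos (q.2 * π)) * Real.cos (q.1 * x))^2) :=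
      (continuous_finset_sum _ (fun q _ => continuous_const.mul
        (Real.continuous_cos.comp (continuous_const.mul continuous_id)))).pow 2
    rw [intervalIntegral.integral_congr (g := fun x =>
        (∑ q ∈ T, (a q * Real.cos (q.2 * (0:ℝ))) * Real.cos (q.1 * x))^2
        + (∑ q ∈ T, (a q * Real.cos (q.2 * π)) * Real.cos (q.1 * x))^2)
        (fun x _ => h1 x),
      intervalIntegral.integral_add (hc1.intervalIntegrable _ _) (hc2.intervalIntegrable _ _),
      int_edge_fst T (fun q => a q * Real.cos (q.2 * (0:ℝ))),
      int_edge_fst T (fun q => a q * Real.cos (q.2 * π)),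
      ← Finset.sum_add_distrib]
    exact Finset.sum_congr rfl fun m _ => by ring
  -- indicator quantities
  set r : ℕ × ℕ → ℝ := fun q =>
    if (T.filter (fun q' => q'.2 = q.2)).card = 1 then π * (a q)^2 else 0 with hrdef
  set s : ℕ × ℕ → ℝ := fun q =>
    if (T.filter (fun q' => q'.1 = q.1)).card = 1 then π * (a q)^2 else 0 with hsdef
  have hr0 : ∀ q, 0 ≤ r q := by
    intro q; rw [hrdef]; dsimp only; split
    · positivity
    · exact le_refl 0
  have hs0 : ∀ q, 0 ≤ s q := by
    intro q; rw [hsdef]; dsimp only; split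
    · positivity
    · exact le_refl 0
  -- Step A : ∑ r ≤ Y
  have stepA : ∑ q ∈ T, r q ≤ ∑ n ∈ T.image Prod.snd,
          ((∑ q ∈ T.filter (fun q => q.2 = n), a q * Real.cos (q.1 * (0:ℝ)))^2
          + (∑ q ∈ T.filter (fun q => q.2 = n), a q * Real.cos (q.1 * π))^2) * ee n := by
    rw [← Finset.sum_fiberwise_of_maps_to (fun q hq => Finset.mem_image_of_mem Prod.snd hq) r]
    refine Finset.sum_le_sum fun n hn => ?_
    by_cases hc : (T.filter (fun q => q.2 = n)).card = 1
    · obtain ⟨q₀, hq₀⟩ := Finset.card_eq_one.mp hc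
      have hq₀T : q₀ ∈ T.filter (fun q => q.2 = n) := hq₀ ▸ Finset.mem_singleton_self q₀
      have hq₀2 : q₀.2 = n := (Finset.mem_filter.mp hq₀T).2
      rw [hq₀, Finset.sum_singleton, Finset.sum_singleton, Finset.sum_singleton]
      have hrq : r q₀ = π * (a q₀)^2 := by
        rw [hrdef]; dsimp only; rw [hq₀2, hq₀]; simp
      rw [hrq, mul_zero, Real.cos_zero, mul_one]
      have hcosπ : Real.cos ((q₀.1:ℝ) * π)^2 = 1 := by
        have hsin : Real.sin ((q₀.1:ℝ) * π) = 0 := Real.sin_nat_mul_pi q₀.1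
        nlinarith [Real.sin_sq_add_cos_sq ((q₀.1:ℝ) * π)]
      have h5 : (a q₀ * Real.cos ((q₀.1:ℝ) * π))^2 = (a q₀)^2 := by
        rw [mul_pow, hcosπ, mul_one]
      rw [h5]
      have hkey : 0 ≤ (a q₀)^2 * (2 * ee n - π) :=
        mul_nonneg (sq_nonneg _) (by linarith [ee_ge n])
      nlinarith [hkey]
    · have hz : ∀ q ∈ T.filter (fun q => q.2 = n), r q = 0 := by
        intro q hq
        have hq2 : q.2 = n := (Finset.mem_filter.mp hq).2
        rw [hrdef]; dsimp only; rw [hq2]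
        exact if_neg hc
      rw [Finset.sum_eq_zero hz]
      have h1 : (0:ℝ) ≤ (∑ q ∈ T.filter (fun q => q.2 = n), a q * Real.cos (q.1 * (0:ℝ)))^2
          + (∑ q ∈ T.filter (fun q => q.2 = n), a q * Real.cos (q.1 * π))^2 := by positivity
      exact mul_nonneg h1 (ee_pos n).le
  -- Step B : ∑ s ≤ X
  have stepB : ∑ q ∈ T, s q ≤ ∑ m ∈ T.image Prod.fst,
          ((∑ q ∈ T.filter (fun q => q.1 = m), a q * Real.cos (q.2 * (0:ℝ)))^2
          + (∑ q ∈ T.filter (fun q => q.1 = m), a q * Real.cos (q.2 * π))^2) * ee m := by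
    rw [← Finset.sum_fiberwise_of_maps_to (fun q hq => Finset.mem_image_of_mem Prod.fst hq) s]
    refine Finset.sum_le_sum fun m hm => ?_
    by_cases hc : (T.filter (fun q => q.1 = m)).card = 1
    · obtain ⟨q₀, hq₀⟩ := Finset.card_eq_one.mp hc
      have hq₀T : q₀ ∈ T.filter (fun q => q.1 = m) := hq₀ ▸ Finset.mem_singleton_self q₀
      have hq₀1 : q₀.1 = m := (Finset.mem_filter.mp hq₀T).2
      rw [hq₀, Finset.sum_singleton, Finset.sum_singleton, Finset.sum_singleton]
      have hsq : s q₀ = π * (a q₀)^2 := by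
        rw [hsdef]; dsimp only; rw [hq₀1, hq₀]; simp
      rw [hsq, mul_zero, Real.cos_zero, mul_one]
      have hcosπ : Real.cos ((q₀.2:ℝ) * π)^2 = 1 := by
        have hsin : Real.sin ((q₀.2:ℝ) * π) = 0 := Real.sin_nat_mul_pi q₀.2
        nlinarith [Real.sin_sq_add_cos_sq ((q₀.2:ℝ) * π)]
      have h5 : (a q₀ * Real.cos ((q₀.2:ℝ) * π))^2 = (a q₀)^2 := by
        rw [mul_pow, hcosπ, mul_one]
      rw [h5]
      have hkey : 0 ≤ (a q₀)^2 * (2 * ee m - π) :=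
        mul_nonneg (sq_nonneg _) (by linarith [ee_ge m])
      nlinarith [hkey]
    · have hz : ∀ q ∈ T.filter (fun q => q.1 = m), s q = 0 := by
        intro q hq
        have hq1 : q.1 = m := (Finset.mem_filter.mp hq).2
        rw [hsdef]; dsimp only; rw [hq1]
        exact if_neg hc
      rw [Finset.sum_eq_zero hz]
      have h1 : (0:ℝ) ≤ (∑ q ∈ T.filter (fun q => q.1 = m), a q * Real.cos (q.2 * (0:ℝ)))^2
          + (∑ q ∈ T.filter (fun q => q.1 = m), a q * Real.cos (q.2 * π))^2 := by positivity
      exact mul_nonneg h1 (ee_pos m).le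
  -- Step C : pointwise bound
  have stepC : ∀ q ∈ T, (1/π) * ((a q)^2 * (ee q.1 * ee q.2)) ≤ r q + s q := by
    intro q hq
    obtain ⟨k1, k2⟩ := hTfreq q hq
    have key : π * (a q)^2 ≤ r q + s q := by
      rcases le_total q.2 q.1 with hcase | hcase
      · have hsing : T.filter (fun q' => q'.2 = q.2) = {q} := by
          apply Finset.eq_singleton_iff_unique_mem.mpr
          refine ⟨Finset.mem_filter.mpr ⟨hq, rfl⟩, ?_⟩
          intro q' hq'
          obtain ⟨hq'T, hq'2⟩ := Finset.mem_filter.mp hq'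
          obtain ⟨l1, l2⟩ := hTfreq q' hq'T
          rw [hq'2] at l1 l2
          have h1 : q'.1 = q.1 := unique_ge hδ0 hδ hcase k1 k2 l1 l2
          exact Prod.ext h1 hq'2
        have hrq : r q = π * (a q)^2 := by
          rw [hrdef]; dsimp only; rw [hsing]; simp
        linarith [hs0 q]
      · have hsing : T.filter (fun q' => q'.1 = q.1) = {q} := by
          apply Finset.eq_singleton_iff_unique_mem.mpr
          refine ⟨Finset.mem_filter.mpr ⟨hq, rfl⟩, ?_⟩
          intro q' hq'
          obtain ⟨hq'T, hq'1⟩ := Finset.mem_filter.mp hq'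
          obtain ⟨l1, l2⟩ := hTfreq q' hq'T
          rw [hq'1] at l1 l2
          rw [add_comm ((q.1:ℝ)^2)] at l1 l2
          rw [add_comm ((q.1:ℝ)^2)] at k1 k2
          have h2 : q'.2 = q.2 := unique_ge hδ0 hδ hcase k1 k2 l1 l2
          exact Prod.ext hq'1 h2
        have hsq : s q = π * (a q)^2 := by
          rw [hsdef]; dsimp only; rw [hsing]; simp
        linarith [hr0 q]
    have hee : (a q)^2 * (ee q.1 * ee q.2) ≤ (a q)^2 * (π * π) := by
      exact mul_le_mul_of_nonneg_left
        (mul_le_mul (ee_le q.1) (ee_le q.2) (ee_pos q.2).le pi_pos.le) (sq_nonneg _)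
    calc (1/π) * ((a q)^2 * (ee q.1 * ee q.2)) ≤ (1/π) * ((a q)^2 * (π * π)) :=
          mul_le_mul_of_nonneg_left hee (by positivity)
      _ = π * (a q)^2 := by field_simp
      _ ≤ r q + s q := key
  -- conclude
  calc (1/π : ℝ) = (1/π) * (∑ q ∈ T, (a q)^2 * (ee q.1 * ee q.2)) := by rw [hnorm', mul_one]
    _ = ∑ q ∈ T, (1/π) * ((a q)^2 * (ee q.1 * ee q.2)) := Finset.mul_sum _ _ _
    _ ≤ ∑ q ∈ T, (r q + s q) := Finset.sum_le_sum stepC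
    _ = (∑ q ∈ T, r q) + (∑ q ∈ T, s q) := Finset.sum_add_distrib
    _ ≤ (∫ y in (0:ℝ)..π, (p 0 y)^2 + (p π y)^2) +
        (∫ x in (0:ℝ)..π, (p x 0)^2 + (p x π)^2) := by
        rw [hY, hX]
        exact add_le_add stepA stepB
end

section
/- (Boundary values of spectral clusters on the square, upper bound) With Q = (0,π)² and notation as above, there exist δ₀, C > 0 such that for 0 < δ ≤ δ₀, s ≥ 1, and every L²(Q)-normalized spectral cluster p = Σ a_{m,n} u_{m,n} with all frequencies λ_{m,n} ∈ [s, s+δ], one has ∫_{∂Q} |p|² dS ≤ C s^{1/2}. -/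
open Real


noncomputable def cc (n : ℕ) : ℝ := if n = 0 then π else π/2

lemma cc_le_pi (n : ℕ) : cc n ≤ π := by
  unfold cc; split <;> linarith [pi_pos]

lemma half_le_cc (n : ℕ) : π/2 ≤ cc n := by
  unfold cc; split <;> linarith [pi_pos]

lemma integral_cos_smul (c : ℝ) (hc : c ≠ 0) :
    ∫ x in (0:ℝ)..π, cos (c * x) = sin (c * π) / c := by
  rw [intervalIntegral.integral_comp_mul_left (fun x => cos x) hc]
  simp [integral_cos, div_eq_inv_mul]

lemma integral_cos_nat_cast (j : ℤ) :
    ∫ x in (0:ℝ)..π, cos ((j:ℝ) * x) = if j = 0 then π else 0 := by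
  rcases eq_or_ne j 0 with h | h
  · simp [h]
  · have hj : (j:ℝ) ≠ 0 := Int.cast_ne_zero.mpr h
    rw [integral_cos_smul _ hj, if_neg h]
    have : sin ((j:ℝ) * π) = 0 := by
      simpa [mul_comm] using Real.sin_int_mul_pi j
    simp [this]

lemma cosInt (m k : ℕ) :
    ∫ x in (0:ℝ)..π, cos (m * x) * cos (k * x)
      = if m = k then cc m else 0 := by
  have key : ∀ x : ℝ, cos (m*x) * cos (k*x)
      = (cos (((m:ℤ) - k : ℤ) * x) + cos (((m:ℤ) + k : ℤ) * x)) / 2 := by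
    intro x
    push_cast
    rw [sub_mul, add_mul, cos_sub, cos_add]
    ring
  rw [intervalIntegral.integral_congr (fun x _ => key x)]
  rw [intervalIntegral.integral_div]
  rw [intervalIntegral.integral_add ((by fun_prop : Continuous fun x : ℝ => cos ((((m:ℤ) - k : ℤ):ℝ) * x)).intervalIntegrable _ _) ((by fun_prop : Continuous fun x : ℝ => cos ((((m:ℤ) + k : ℤ):ℝ) * x)).intervalIntegrable _ _)]
  rw [integral_cos_nat_cast, integral_cos_nat_cast]
  unfold cc
  rcases eq_or_ne m k with h | h
  · subst h
    rcases eq_or_ne m 0 with h0 | h0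
    · simp [h0]
    · have hmm : ((m:ℤ) + m) ≠ 0 := by omega
      simp [h0, hmm]
  · have h1 : ((m:ℤ) - k) ≠ 0 := by omega
    rcases eq_or_ne ((m:ℤ)+k) 0 with h2 | h2
    · exfalso; omega
    · simp [h1, h2, h]

lemma sum_sq_integral {ι : Type*} (A : Finset ι) (b : ι → ℝ) (g : ι → ℕ) :
    ∫ y in (0:ℝ)..π, (∑ i ∈ A, b i * cos (g i * y))^2
      = ∑ i ∈ A, ∑ j ∈ A, b i * b j * (if g i = g j then cc (g i) else 0) := by
  have h1 : ∀ y : ℝ, (∑ i ∈ A, b i * cos (g i * y))^2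
      = ∑ i ∈ A, ∑ j ∈ A, (b i * b j) * (cos (g i * y) * cos (g j * y)) := by
    intro y
    rw [sq, Finset.sum_mul_sum]
    apply Finset.sum_congr rfl; intro i _
    apply Finset.sum_congr rfl; intro j _
    ring
  have hInt : ∀ i j : ι, IntervalIntegrable
      (fun y : ℝ => (b i * b j) * (cos (g i * y) * cos (g j * y)))
      MeasureTheory.volume 0 π := fun i j =>
    ((by fun_prop : Continuous fun y : ℝ =>
        (b i * b j) * (cos (g i * y) * cos (g j * y))).intervalIntegrable _ _)
  rw [intervalIntegral.integral_congr (fun y _ => h1 y)]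
  rw [intervalIntegral.integral_finset_sum
    (fun i _ => (continuous_finset_sum A (fun j _ => (by fun_prop : Continuous fun y : ℝ =>
        (b i * b j) * (cos (g i * y) * cos (g j * y))))).intervalIntegrable _ _)]
  refine Finset.sum_congr rfl (fun i _ => ?_)
  rw [intervalIntegral.integral_finset_sum (fun j _ => hInt i j)]
  refine Finset.sum_congr rfl (fun j _ => ?_)
  rw [intervalIntegral.integral_const_mul, cosInt]

lemma sqrt_add_le (x y : ℝ) (hx : 0 ≤ x) (hy : 0 ≤ y) :
    Real.sqrt (x + y) ≤ Real.sqrt x + Real.sqrt y := by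
  rw [show Real.sqrt x + Real.sqrt y
      = Real.sqrt ((Real.sqrt x + Real.sqrt y)^2) from
    (Real.sqrt_sq (by positivity)).symm]
  apply Real.sqrt_le_sqrt
  have h1 := Real.sq_sqrt hx
  have h2 := Real.sq_sqrt hy
  nlinarith [Real.sqrt_nonneg x, Real.sqrt_nonneg y]

lemma card_annulus {s δ : ℝ} (h1 : 1 ≤ s) (hδ0 : 0 ≤ δ) (hδ : δ ≤ 1)
    (n : ℕ) (B : Finset ℕ)
    (hB : ∀ m ∈ B, s^2 ≤ (m:ℝ)^2 + (n:ℝ)^2 ∧ (m:ℝ)^2 + (n:ℝ)^2 ≤ (s+δ)^2) :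
    (B.card : ℝ) ≤ 3 * Real.sqrt s := by
  have hs0 : (0:ℝ) < s := by linarith
  have hsq1 : 1 ≤ Real.sqrt s := by
    rw [show (1:ℝ) = Real.sqrt 1 from (Real.sqrt_one).symm]
    exact Real.sqrt_le_sqrt h1
  rcases B.eq_empty_or_nonempty with hBe | hBne
  · simp only [hBe, Finset.card_empty, Nat.cast_zero]
    positivity
  set L : ℝ := Real.sqrt (max (s^2 - (n:ℝ)^2) 0) with hL
  set U : ℝ := Real.sqrt (max ((s+δ)^2 - (n:ℝ)^2) 0) with hU
  have hmem : ∀ m ∈ B, L ≤ (m:ℝ) ∧ (m:ℝ) ≤ U := by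
    intro m hm
    obtain ⟨hlo, hhi⟩ := hB m hm
    constructor
    · rw [hL, show (m:ℝ) = Real.sqrt ((m:ℝ)^2) from (Real.sqrt_sq m.cast_nonneg).symm]
      apply Real.sqrt_le_sqrt
      rw [max_le_iff]
      constructor
      · linarith
      · positivity
    · rw [hU, show (m:ℝ) = Real.sqrt ((m:ℝ)^2) from (Real.sqrt_sq m.cast_nonneg).symm]
      apply Real.sqrt_le_sqrt
      rw [le_max_iff]
      left; linarith
  have hLU : L ≤ U := by
    obtain ⟨m, hm⟩ := hBne
    obtain ⟨h1', h2'⟩ := hmem m hm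
    linarith
  have hUL : U - L ≤ Real.sqrt 3 * Real.sqrt s := by
    have hdiff : U^2 ≤ L^2 + 3*s := by
      have hU2 : U^2 = max ((s+δ)^2 - (n:ℝ)^2) 0 := Real.sq_sqrt (le_max_right _ _)
      have hL2 : L^2 = max (s^2 - (n:ℝ)^2) 0 := Real.sq_sqrt (le_max_right _ _)
      have hmax0 : (0:ℝ) ≤ max (s^2 - (n:ℝ)^2) 0 := le_max_right _ _
      have hmax1 : s^2 - (n:ℝ)^2 ≤ max (s^2 - (n:ℝ)^2) 0 := le_max_left _ _
      rw [hU2, hL2]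
      apply max_le
      · nlinarith
      · nlinarith
    have : U ≤ L + Real.sqrt (3*s) := by
      have hLn : 0 ≤ L := Real.sqrt_nonneg _
      have h3s : Real.sqrt (3*s)^2 = 3*s := Real.sq_sqrt (by positivity)
      rw [show U = Real.sqrt (U^2) from (Real.sqrt_sq (Real.sqrt_nonneg _)).symm]
      rw [show L + Real.sqrt (3*s) = Real.sqrt ((L + Real.sqrt (3*s))^2) from
        (Real.sqrt_sq (by positivity)).symm]
      apply Real.sqrt_le_sqrt
      nlinarith [Real.sqrt_nonneg (3*s)]
    rw [← Real.sqrt_mul (by norm_num : (0:ℝ) ≤ 3)]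
    linarith
  have hcard : B ⊆ Finset.Icc ⌈L⌉₊ ⌊U⌋₊ := by
    intro m hm
    obtain ⟨hlo, hhi⟩ := hmem m hm
    rw [Finset.mem_Icc]
    exact ⟨Nat.ceil_le.mpr hlo, Nat.le_floor hhi⟩
  have hc2 : (B.card : ℝ) ≤ U - L + 1 := by
    have := Finset.card_le_card hcard
    rw [Nat.card_Icc] at this
    rcases le_or_gt (⌈L⌉₊) (⌊U⌋₊ + 1) with hle | hlt
    · calc (B.card : ℝ) ≤ ((⌊U⌋₊ + 1 - ⌈L⌉₊ : ℕ) : ℝ) := by exact_mod_cast this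
        _ = (⌊U⌋₊ : ℝ) + 1 - (⌈L⌉₊ : ℝ) := by
            rw [Nat.cast_sub hle]; push_cast; ring
        _ ≤ U - L + 1 := by
            have h1' := Nat.floor_le (le_trans (Real.sqrt_nonneg _) hLU)
            have h2' := Nat.le_ceil L
            linarith
    · have : ⌊U⌋₊ + 1 - ⌈L⌉₊ = 0 := by omega
      rw [this] at *
      have : B.card = 0 := by omega
      rw [this]; simp; linarith
  have h3 : Real.sqrt 3 ≤ 2 := by
    rw [show (2:ℝ) = Real.sqrt 4 by rw [show (4:ℝ) = 2^2 by norm_num, Real.sqrt_sq]; norm_num]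
    exact Real.sqrt_le_sqrt (by norm_num)
  have hsqs : Real.sqrt 3 * Real.sqrt s ≤ 2 * Real.sqrt s := by
    apply mul_le_mul_of_nonneg_right h3 (Real.sqrt_nonneg _)
  linarith

lemma double_sum_bound {ι : Type*} [DecidableEq ι] (A : Finset ι) (b a : ι → ℝ)
    (g : ι → ℕ) (K : ℝ) (hK0 : 0 ≤ K)
    (hb : ∀ i ∈ A, |b i| ≤ |a i|)
    (hK : ∀ i ∈ A, ((A.filter (fun j => g j = g i)).card : ℝ) ≤ K) :
    ∑ i ∈ A, ∑ j ∈ A, b i * b j * (if g i = g j then cc (g i) else 0)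
      ≤ π * K * ∑ i ∈ A, (a i)^2 := by
  have step1 : ∑ i ∈ A, ∑ j ∈ A, b i * b j * (if g i = g j then cc (g i) else 0)
      ≤ ∑ i ∈ A, ∑ j ∈ A, (if g i = g j then π * ((a i)^2 + (a j)^2)/2 else 0) := by
    apply Finset.sum_le_sum; intro i hi
    apply Finset.sum_le_sum; intro j hj
    rcases eq_or_ne (g i) (g j) with h | h
    · simp only [h, if_true, if_pos rfl]
      calc b i * b j * cc (g j) ≤ |b i * b j| * cc (g j) := by
            apply mul_le_mul_of_nonneg_right (le_abs_self _)
              (le_trans (by positivity) (half_le_cc (g j)))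
        _ ≤ |a i| * |a j| * π := by
            rw [abs_mul]
            apply mul_le_mul (mul_le_mul (hb i hi) (hb j hj) (abs_nonneg _) (abs_nonneg _))
              (cc_le_pi _) (le_trans (by positivity) (half_le_cc (g j))) (by positivity)
        _ ≤ π * ((a i)^2 + (a j)^2)/2 := by
            nlinarith [sq_abs (a i), sq_abs (a j), abs_nonneg (a i), abs_nonneg (a j),
              sq_nonneg (|a i| - |a j|), pi_pos]
    · simp [h]
  have step2 : ∑ i ∈ A, ∑ j ∈ A, (if g i = g j then π * ((a i)^2 + (a j)^2)/2 else 0)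
      = π * ∑ i ∈ A, (a i)^2 * ((A.filter (fun j => g j = g i)).card : ℝ) := by
    have e1 : ∀ i ∈ A, ∀ j ∈ A, (if g i = g j then π * ((a i)^2 + (a j)^2)/2 else 0)
        = (if g i = g j then π * (a i)^2/2 else 0) + (if g i = g j then π * (a j)^2/2 else 0) := by
      intro i _ j _; split <;> ring
    rw [Finset.sum_congr rfl (fun i hi => Finset.sum_congr rfl (fun j hj => e1 i hi j hj))]
    rw [Finset.sum_congr rfl (fun i (hi : i ∈ A) => Finset.sum_add_distrib)]
    rw [Finset.sum_add_distrib]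
    have swap : ∑ i ∈ A, ∑ j ∈ A, (if g i = g j then π * (a j)^2/2 else 0)
        = ∑ i ∈ A, ∑ j ∈ A, (if g i = g j then π * (a i)^2/2 else 0) := by
      rw [Finset.sum_comm]
      apply Finset.sum_congr rfl; intro i _
      apply Finset.sum_congr rfl; intro j _
      simp [eq_comm]
    rw [swap, ← two_mul]
    have inner : ∀ i ∈ A, ∑ j ∈ A, (if g i = g j then π * (a i)^2/2 else 0)
        = (π * (a i)^2/2) * ((A.filter (fun j => g j = g i)).card : ℝ) := by
      intro i _
      rw [← Finset.sum_filter, Finset.sum_const, nsmul_eq_mul, mul_comm]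
      have hfe : Finset.filter (fun j => g i = g j) A = Finset.filter (fun j => g j = g i) A :=
        Finset.filter_congr (fun j _ => by exact eq_comm)
      rw [hfe]
    rw [Finset.sum_congr rfl inner, Finset.mul_sum, Finset.mul_sum]
    exact Finset.sum_congr rfl (fun i _ => by ring)
  have step3 : π * ∑ i ∈ A, (a i)^2 * ((A.filter (fun j => g j = g i)).card : ℝ)
      ≤ π * K * ∑ i ∈ A, (a i)^2 := by
    have key : ∑ i ∈ A, (a i)^2 * ((A.filter (fun j => g j = g i)).card : ℝ)
        ≤ K * ∑ i ∈ A, (a i)^2 := by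
      rw [Finset.mul_sum]
      apply Finset.sum_le_sum; intro i hi
      calc (a i)^2 * ((A.filter (fun j => g j = g i)).card : ℝ)
          ≤ (a i)^2 * K := mul_le_mul_of_nonneg_left (hK i hi) (sq_nonneg _)
        _ = K * (a i)^2 := by ring
    calc π * ∑ i ∈ A, (a i)^2 * ((A.filter (fun j => g j = g i)).card : ℝ)
        ≤ π * (K * ∑ i ∈ A, (a i)^2) := mul_le_mul_of_nonneg_left key (le_of_lt pi_pos)
      _ = π * K * ∑ i ∈ A, (a i)^2 := (mul_assoc _ _ _).symm
  linarith

lemma orth_double (A : Finset (ℕ × ℕ)) (a : ℕ × ℕ → ℝ) :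
    ∫ x in (0:ℝ)..π, ∑ i ∈ A, ∑ j ∈ A,
        (a i * cos (i.1 * x)) * (a j * cos (j.1 * x)) * (if i.2 = j.2 then cc i.2 else 0)
      = ∑ i ∈ A, (a i)^2 * (cc i.1 * cc i.2) := by
  have h1 : ∀ x : ℝ, ∑ i ∈ A, ∑ j ∈ A,
      (a i * cos (i.1 * x)) * (a j * cos (j.1 * x)) * (if i.2 = j.2 then cc i.2 else 0)
      = ∑ i ∈ A, ∑ j ∈ A,
        (a i * a j * (if i.2 = j.2 then cc i.2 else 0)) * (cos (i.1 * x) * cos (j.1 * x)) :=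
    fun x => Finset.sum_congr rfl fun i _ => Finset.sum_congr rfl fun j _ => by ring
  rw [intervalIntegral.integral_congr (fun x _ => h1 x)]
  have hInt : ∀ i j : ℕ × ℕ, IntervalIntegrable
      (fun x : ℝ => (a i * a j * (if i.2 = j.2 then cc i.2 else 0)) * (cos (i.1 * x) * cos (j.1 * x)))
      MeasureTheory.volume 0 π := fun i j =>
    ((by fun_prop : Continuous fun x : ℝ =>
        (a i * a j * (if i.2 = j.2 then cc i.2 else 0)) * (cos (i.1 * x) * cos (j.1 * x)))).intervalIntegrable _ _
  rw [intervalIntegral.integral_finset_sum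
    (fun i _ => (continuous_finset_sum A (fun j _ => (by fun_prop : Continuous fun x : ℝ =>
        (a i * a j * (if i.2 = j.2 then cc i.2 else 0)) * (cos (i.1 * x) * cos (j.1 * x))))).intervalIntegrable _ _)]
  refine Finset.sum_congr rfl (fun i hi => ?_)
  rw [intervalIntegral.integral_finset_sum (fun j _ => hInt i j)]
  have hterm : ∀ j ∈ A, (∫ x in (0:ℝ)..π,
      (a i * a j * (if i.2 = j.2 then cc i.2 else 0)) * (cos (i.1 * x) * cos (j.1 * x)))
      = a i * a j * (if i.2 = j.2 then cc i.2 else 0) * (if i.1 = j.1 then cc i.1 else 0) := by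
    intro j _
    rw [intervalIntegral.integral_const_mul, cosInt]
  rw [Finset.sum_congr rfl hterm]
  rw [Finset.sum_eq_single_of_mem i hi]
  · simp [sq]; ring
  · intro j _ hne
    by_cases h1' : i.1 = j.1
    · by_cases h2' : i.2 = j.2
      · exact absurd (Prod.ext h1' h2').symm hne
      · simp [h2']
    · simp [h1']


/-- boundary values of spectral clusters on the square, upper bound:
on `Q = (0,π)²`, there are `δ₀, C > 0` such that for `0 < δ ≤ δ₀`, `s ≥ 1`, every
`L²(Q)`-normalized spectral cluster `p = Σ a_{m,n} cos(mx)cos(ny)` with all frequencies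
`√(m²+n²)` in `[s, s+δ]` satisfies `∫_{∂Q} |p|² dS ≤ C s^{1/2}`. -/
theorem stmt_13 :
    ∃ δ₀ : ℝ, 0 < δ₀ ∧ ∃ C : ℝ, 0 < C ∧
      ∀ δ : ℝ, 0 < δ → δ ≤ δ₀ → ∀ s : ℝ, 1 ≤ s →
      ∀ (A : Finset (ℕ × ℕ)) (a : ℕ × ℕ → ℝ),
        (∀ mn ∈ A, a mn ≠ 0 →
          s ≤ Real.sqrt ((mn.1 : ℝ)^2 + (mn.2 : ℝ)^2) ∧
          Real.sqrt ((mn.1 : ℝ)^2 + (mn.2 : ℝ)^2) ≤ s + δ) →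
        (∀ p : ℝ → ℝ → ℝ,
          (∀ x y : ℝ, p x y = ∑ mn ∈ A, a mn * Real.cos (mn.1 * x) * Real.cos (mn.2 * y)) →
          (∫ x in (0:ℝ)..π, ∫ y in (0:ℝ)..π, (p x y)^2) = 1 →
          (∫ y in (0:ℝ)..π, (p 0 y)^2 + (p π y)^2) +
            (∫ x in (0:ℝ)..π, (p x 0)^2 + (p x π)^2) ≤ C * Real.sqrt s) := by
  refine ⟨1, one_pos, 48, by norm_num, ?_⟩
  intro δ hδ0 hδ1 s hs A a hA p hp hnorm
  classical
  have hs0 : (0:ℝ) < s := by linarith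
  have hsq1 : 1 ≤ Real.sqrt s := by
    rw [show (1:ℝ) = Real.sqrt 1 from (Real.sqrt_one).symm]
    exact Real.sqrt_le_sqrt hs
  set A' : Finset (ℕ × ℕ) := A.filter (fun i => a i ≠ 0) with hA'def
  -- p as a sum over A'
  have hp' : ∀ x y : ℝ, p x y = ∑ i ∈ A', a i * cos (i.1 * x) * cos (i.2 * y) := by
    intro x y
    rw [hp]
    refine (Finset.sum_subset (Finset.filter_subset _ _) (fun i hiA hni => ?_)).symm
    have hz : a i = 0 := by
      by_contra h
      exact hni (Finset.mem_filter.mpr ⟨hiA, h⟩)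
    rw [hz]; ring
  -- frequency bounds on A'
  have hfreq : ∀ i ∈ A', s^2 ≤ (i.1:ℝ)^2 + (i.2:ℝ)^2 ∧ (i.1:ℝ)^2 + (i.2:ℝ)^2 ≤ (s+δ)^2 := by
    intro i hi
    rw [hA'def, Finset.mem_filter] at hi
    obtain ⟨h1, h2⟩ := hA i hi.1 hi.2
    have hX : (0:ℝ) ≤ (i.1:ℝ)^2 + (i.2:ℝ)^2 := by positivity
    have hr := Real.sq_sqrt hX
    have hrn := Real.sqrt_nonneg ((i.1:ℝ)^2 + (i.2:ℝ)^2)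
    constructor
    · nlinarith
    · nlinarith
  -- inner integral expansion (in y), for every x
  have inner_int : ∀ x : ℝ, (∫ y in (0:ℝ)..π, (p x y)^2)
      = ∑ i ∈ A', ∑ j ∈ A',
          (a i * cos (i.1 * x)) * (a j * cos (j.1 * x)) * (if i.2 = j.2 then cc i.2 else 0) := by
    intro x
    rw [intervalIntegral.integral_congr (fun y _ => by rw [hp' x y])]
    exact sum_sq_integral A' (fun i => a i * cos (i.1 * x)) (fun i => i.2)
  -- normalization in coefficient form
  have hnorm' : ∑ i ∈ A', (a i)^2 * (cc i.1 * cc i.2) = 1 := by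
    rw [← hnorm, intervalIntegral.integral_congr (fun x _ => inner_int x), orth_double]
  have ha2 : ∑ i ∈ A', (a i)^2 ≤ 4/π^2 := by
    have hlow : ∑ i ∈ A', (a i)^2 * (π/2 * (π/2)) ≤ ∑ i ∈ A', (a i)^2 * (cc i.1 * cc i.2) := by
      apply Finset.sum_le_sum
      intro i _
      apply mul_le_mul_of_nonneg_left _ (sq_nonneg _)
      have c1 := half_le_cc i.1
      have c2 := half_le_cc i.2
      nlinarith [pi_pos]
    rw [hnorm'] at hlow
    rw [← Finset.sum_mul] at hlow
    have hπ2 : (0:ℝ) < π^2 := by positivity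
    rw [le_div_iff₀ hπ2]
    nlinarith [hlow]
  -- counting bound : second coordinate fixed
  have hcount2 : ∀ i ∈ A', ((A'.filter (fun j => j.2 = i.2)).card : ℝ) ≤ 3 * Real.sqrt s := by
    intro i _
    set B : Finset ℕ := (A'.filter (fun j => j.2 = i.2)).image Prod.fst with hB
    have hcard : (A'.filter (fun j => j.2 = i.2)).card = B.card := by
      rw [hB]
      exact (Finset.card_image_of_injOn (fun j hj k hk hjk => by
        simp only [Finset.coe_filter, Set.mem_setOf_eq] at hj hk
        exact Prod.ext hjk (hj.2.trans hk.2.symm))).symm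
    rw [hcard]
    apply card_annulus hs (le_of_lt hδ0) hδ1 i.2
    intro m hm
    rw [hB, Finset.mem_image] at hm
    obtain ⟨j, hj, hjm⟩ := hm
    rw [Finset.mem_filter] at hj
    have := hfreq j hj.1
    rw [← hjm, ← hj.2]
    exact this
  -- counting bound : first coordinate fixed
  have hcount1 : ∀ i ∈ A', ((A'.filter (fun j => j.1 = i.1)).card : ℝ) ≤ 3 * Real.sqrt s := by
    intro i _
    set B : Finset ℕ := (A'.filter (fun j => j.1 = i.1)).image Prod.snd with hB
    have hcard : (A'.filter (fun j => j.1 = i.1)).card = B.card := by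
      rw [hB]
      exact (Finset.card_image_of_injOn (fun j hj k hk hjk => by
        simp only [Finset.coe_filter, Set.mem_setOf_eq] at hj hk
        exact Prod.ext (hj.2.trans hk.2.symm) hjk)).symm
    rw [hcard]
    apply card_annulus hs (le_of_lt hδ0) hδ1 i.1
    intro m hm
    rw [hB, Finset.mem_image] at hm
    obtain ⟨j, hj, hjm⟩ := hm
    rw [Finset.mem_filter] at hj
    obtain ⟨hf1, hf2⟩ := hfreq j hj.1
    rw [← hjm, ← hj.2]
    constructor <;> linarith [hf1, hf2]
  have hKnn : (0:ℝ) ≤ 3 * Real.sqrt s := by positivity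
  -- generic final numeric bound
  have hfinal : π * (3 * Real.sqrt s) * ∑ i ∈ A', (a i)^2 ≤ 12 * Real.sqrt s := by
    have h1 : π * (3 * Real.sqrt s) * ∑ i ∈ A', (a i)^2
        ≤ π * (3 * Real.sqrt s) * (4/π^2) :=
      mul_le_mul_of_nonneg_left ha2 (by positivity)
    have h2 : π * (3 * Real.sqrt s) * (4/π^2) = (12/π) * Real.sqrt s := by
      field_simp; ring
    have h3 : (12/π) * Real.sqrt s ≤ 12 * Real.sqrt s := by
      apply mul_le_mul_of_nonneg_right _ (Real.sqrt_nonneg s)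
      rw [div_le_iff₀ pi_pos]
      nlinarith [pi_gt_three]
    linarith
  -- boundary bound, y-direction (x = t fixed)
  have hbd_y : ∀ t : ℝ, (∫ y in (0:ℝ)..π, (p t y)^2) ≤ 12 * Real.sqrt s := by
    intro t
    rw [inner_int t]
    refine le_trans (double_sum_bound A' (fun i => a i * cos (i.1 * t)) a
      (fun i => i.2) (3 * Real.sqrt s) hKnn ?_ hcount2) hfinal
    intro i _
    rw [abs_mul]
    calc |a i| * |cos (i.1 * t)| ≤ |a i| * 1 :=
          mul_le_mul_of_nonneg_left (abs_cos_le_one _) (abs_nonneg _)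
      _ = |a i| := mul_one _
  -- boundary bound, x-direction (y = t fixed)
  have hbd_x : ∀ t : ℝ, (∫ x in (0:ℝ)..π, (p x t)^2) ≤ 12 * Real.sqrt s := by
    intro t
    have hrw : ∀ x : ℝ, p x t = ∑ i ∈ A', (a i * cos (i.2 * t)) * cos (i.1 * x) := by
      intro x
      rw [hp']
      exact Finset.sum_congr rfl (fun i _ => by ring)
    rw [intervalIntegral.integral_congr (fun x _ => by rw [hrw x])]
    rw [sum_sq_integral A' (fun i => a i * cos (i.2 * t)) (fun i => i.1)]
    refine le_trans (double_sum_bound A' (fun i => a i * cos (i.2 * t)) a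
      (fun i => i.1) (3 * Real.sqrt s) hKnn ?_ hcount1) hfinal
    intro i _
    rw [abs_mul]
    calc |a i| * |cos (i.2 * t)| ≤ |a i| * 1 :=
          mul_le_mul_of_nonneg_left (abs_cos_le_one _) (abs_nonneg _)
      _ = |a i| := mul_one _
  -- continuity for splitting the boundary integrals
  have hcy : ∀ t : ℝ, Continuous fun y => (p t y)^2 := by
    intro t
    have he : (fun y => (p t y)^2)
        = fun y => (∑ i ∈ A, a i * cos (i.1 * t) * cos (i.2 * y))^2 :=
      funext fun y => by rw [hp]
    rw [he]
    exact (continuous_finset_sum A (fun i _ => by fun_prop)).pow 2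
  have hcx : ∀ t : ℝ, Continuous fun x => (p x t)^2 := by
    intro t
    have he : (fun x => (p x t)^2)
        = fun x => (∑ i ∈ A, a i * cos (i.1 * x) * cos (i.2 * t))^2 :=
      funext fun x => by rw [hp]
    rw [he]
    exact (continuous_finset_sum A (fun i _ => by fun_prop)).pow 2
  have hsplit1 : (∫ y in (0:ℝ)..π, (p 0 y)^2 + (p π y)^2)
      = (∫ y in (0:ℝ)..π, (p 0 y)^2) + (∫ y in (0:ℝ)..π, (p π y)^2) :=
    intervalIntegral.integral_add ((hcy 0).intervalIntegrable _ _)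
      ((hcy π).intervalIntegrable _ _)
  have hsplit2 : (∫ x in (0:ℝ)..π, (p x 0)^2 + (p x π)^2)
      = (∫ x in (0:ℝ)..π, (p x 0)^2) + (∫ x in (0:ℝ)..π, (p x π)^2) :=
    intervalIntegral.integral_add ((hcx 0).intervalIntegrable _ _)
      ((hcx π).intervalIntegrable _ _)
  rw [hsplit1, hsplit2]
  have b1 := hbd_y 0
  have b2 := hbd_y π
  have b3 := hbd_x 0
  have b4 := hbd_x π
  linarith
end
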